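/- arXiv:2110.08451 — 2 statements merged into one kernel-verified Lean document; each statement's English description precedes it below -/
import Mathlib

section
/- Let g₁,…,g_m ∈ ℝ[u₁,…,u_k] admit an algebraic certificate of compactness, and let D = {u ∈ ℝᵏ : gᵢ(u) ≥ 0 for all i}. If f ∈ ℝ[u₁,…,u_k] satisfies f(u) > 0 for every u ∈ D, then there exist SOS polynomials s₀, s₁, …, s_m ∈ ℝ[u₁,…,u_k] such that f = s₀ + Σᵢ₌₁^m sᵢ gᵢ. -/
open MvPolynomial

/-- A real multivariate polynomial is a sum of squares. -/
def IsSOS {k : ℕ} (s : MvPolynomial (Fin k) ℝ) : Prop :=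
  ∃ (r : ℕ) (p : Fin r → MvPolynomial (Fin k) ℝ), s = ∑ i, p i ^ 2

abbrev PA (k : ℕ) := MvPolynomial (Fin k) ℝ

namespace Putinar

variable {k : ℕ}

theorem isSOS_zero : IsSOS (0 : PA k) := ⟨0, ![], by simp⟩

theorem isSOS_sq (p : PA k) : IsSOS (p ^ 2) := ⟨1, ![p], by simp⟩

theorem isSOS_one : IsSOS (1 : PA k) := by simpa using isSOS_sq (1 : PA k)

theorem _root_.IsSOS.add {s t : PA k} (hs : IsSOS s) (ht : IsSOS t) : IsSOS (s + t) := by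
  obtain ⟨r₁, p₁, rfl⟩ := hs
  obtain ⟨r₂, p₂, rfl⟩ := ht
  exact ⟨r₁ + r₂, Fin.append p₁ p₂, by
    rw [Fin.sum_univ_add]
    simp [Fin.append_left, Fin.append_right]⟩

theorem _root_.IsSOS.sq_mul {t : PA k} (p : PA k) (ht : IsSOS t) : IsSOS (p ^ 2 * t) := by
  obtain ⟨r, q, rfl⟩ := ht
  exact ⟨r, fun j => p * q j, by simp [Finset.mul_sum, mul_pow]⟩

theorem _root_.IsSOS.mul {s t : PA k} (hs : IsSOS s) (ht : IsSOS t) : IsSOS (s * t) := by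
  obtain ⟨r, p, rfl⟩ := hs
  induction r with
  | zero => simpa using isSOS_zero
  | succ n ih =>
    rw [Fin.sum_univ_castSucc, add_mul]
    exact (ih _).add (ht.sq_mul _)

theorem isSOS_C {a : ℝ} (ha : 0 ≤ a) : IsSOS (C a : PA k) := by
  have : (C a : PA k) = (C (Real.sqrt a)) ^ 2 := by
    rw [← C_pow, Real.sq_sqrt ha]
  rw [this]; exact isSOS_sq _

theorem _root_.IsSOS.smul {t : PA k} {a : ℝ} (ha : 0 ≤ a) (ht : IsSOS t) : IsSOS (C a * t) :=
  (isSOS_C ha).mul ht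

theorem _root_.IsSOS.eval_nonneg {s : PA k} (hs : IsSOS s) (u : Fin k → ℝ) : 0 ≤ eval u s := by
  obtain ⟨r, p, rfl⟩ := hs
  rw [map_sum]
  exact Finset.sum_nonneg fun i _ => by rw [map_pow]; positivity

/-- Quadratic module. -/
structure IsQM (Q : Set (PA k)) : Prop where
  one_mem : (1 : PA k) ∈ Q
  add_mem : ∀ {x y : PA k}, x ∈ Q → y ∈ Q → x + y ∈ Q
  sq_mul_mem : ∀ (p : PA k) {x}, x ∈ Q → p ^ 2 * x ∈ Q

namespace IsQM

variable {Q : Set (PA k)}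

theorem zero_mem (hQ : IsQM Q) : (0 : PA k) ∈ Q := by
  simpa using hQ.sq_mul_mem 0 hQ.one_mem

theorem sos_mul_mem (hQ : IsQM Q) {s x : PA k} (hs : IsSOS s) (hx : x ∈ Q) : s * x ∈ Q := by
  obtain ⟨r, p, rfl⟩ := hs
  induction r with
  | zero => simpa using hQ.zero_mem
  | succ n ih =>
    rw [Fin.sum_univ_castSucc, add_mul]
    exact hQ.add_mem (ih _) (hQ.sq_mul_mem _ hx)

theorem sos_mem (hQ : IsQM Q) {s : PA k} (hs : IsSOS s) : s ∈ Q := by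
  simpa using hQ.sos_mul_mem hs hQ.one_mem

theorem C_mem (hQ : IsQM Q) {a : ℝ} (ha : 0 ≤ a) : (C a : PA k) ∈ Q := hQ.sos_mem (isSOS_C ha)

theorem smul_mem (hQ : IsQM Q) {a : ℝ} (ha : 0 ≤ a) {x : PA k} (hx : x ∈ Q) : C a * x ∈ Q :=
  hQ.sos_mul_mem (isSOS_C ha) hx

theorem sum_mem (hQ : IsQM Q) {ι : Type*} {t : Finset ι} {f : ι → PA k} (h : ∀ i ∈ t, f i ∈ Q) :
    (∑ i ∈ t, f i) ∈ Q := by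
  classical
  induction t using Finset.induction_on with
  | empty => simpa using hQ.zero_mem
  | insert _ _ hni ih =>
    rw [Finset.sum_insert hni]
    exact hQ.add_mem (h _ (Finset.mem_insert_self _ _))
      (ih fun i hi => h i (Finset.mem_insert_of_mem hi))

/-- In a proper quadratic module, constants are nonnegative. -/
theorem nonneg_of_C_mem (hQ : IsQM Q) (hne : (-1 : PA k) ∉ Q) {a : ℝ} (ha : (C a : PA k) ∈ Q) : 0 ≤ a := by
  by_contra hlt
  push_neg at hlt
  apply hne
  have := hQ.smul_mem (a := (-a)⁻¹) (by simp; linarith) ha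
  have e : (C (-a)⁻¹ : PA k) * C a = -1 := by
    rw [← map_mul]
    have : (-a)⁻¹ * a = -1 := by rw [inv_neg, neg_mul, inv_mul_cancel₀ (by linarith : a ≠ 0)]
    rw [this, map_neg, map_one]
  rwa [e] at this

end IsQM

end Putinar

namespace Putinar

variable {k m : ℕ}

/-- The quadratic module generated by `g`. -/
def Mod (g : Fin m → PA k) : Set (PA k) :=
  {a | ∃ (s₀ : PA k) (s : Fin m → PA k), IsSOS s₀ ∧ (∀ i, IsSOS (s i)) ∧
      a = s₀ + ∑ i, s i * g i}

theorem isQM_Mod (g : Fin m → PA k) : IsQM (Mod g) := by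
  constructor
  · exact ⟨1, fun _ => 0, isSOS_one, fun _ => isSOS_zero, by simp⟩
  · rintro x y ⟨s₀, s, hs₀, hs, rfl⟩ ⟨t₀, t, ht₀, ht, rfl⟩
    refine ⟨s₀ + t₀, fun i => s i + t i, hs₀.add ht₀, fun i => (hs i).add (ht i), ?_⟩
    rw [Finset.sum_congr rfl (fun i _ => add_mul (s i) (t i) (g i)), Finset.sum_add_distrib]
    ring
  · rintro p x ⟨s₀, s, hs₀, hs, rfl⟩
    refine ⟨p ^ 2 * s₀, fun i => p ^ 2 * s i, hs₀.sq_mul _, fun i => (hs i).sq_mul _, ?_⟩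
    rw [mul_add, Finset.mul_sum]
    congr 1
    exact Finset.sum_congr rfl fun i _ => by ring

theorem g_mem_Mod (g : Fin m → PA k) (i : Fin m) : g i ∈ Mod g := by
  classical
  refine ⟨0, fun j => if j = i then 1 else 0, isSOS_zero,
    fun j => by by_cases h : j = i <;> simp [h, isSOS_one, isSOS_zero], ?_⟩
  rw [Finset.sum_congr rfl (fun j _ => by
    by_cases h : j = i <;> simp [h] :
      ∀ j ∈ Finset.univ, (if j = i then (1:PA k) else 0) * g j = if j = i then g j else 0)]
  simp

section Arch

variable {g : Fin m → PA k}

/-- Bounded elements. -/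
def Bdd (g : Fin m → PA k) : Set (PA k) :=
  {a | ∃ c : ℝ, (C c - a) ∈ Mod g ∧ (C c + a) ∈ Mod g}

theorem bdd_add {a b : PA k} (ha : a ∈ Bdd g) (hb : b ∈ Bdd g) : a + b ∈ Bdd g := by
  obtain ⟨c, hc1, hc2⟩ := ha
  obtain ⟨d, hd1, hd2⟩ := hb
  have hQ := isQM_Mod g
  refine ⟨c + d, ?_, ?_⟩
  · have h := hQ.add_mem hc1 hd1
    have e : (C c - a) + (C d - b) = (C (c + d) - (a + b) : PA k) := by
      rw [map_add]; ring
    rwa [e] at h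
  · have h := hQ.add_mem hc2 hd2
    have e : (C c + a) + (C d + b) = (C (c + d) + (a + b) : PA k) := by
      rw [map_add]; ring
    rwa [e] at h

theorem bdd_neg {a : PA k} (ha : a ∈ Bdd g) : -a ∈ Bdd g := by
  obtain ⟨c, hc1, hc2⟩ := ha
  exact ⟨c, by rwa [sub_neg_eq_add], by rwa [← sub_eq_add_neg]⟩

theorem bdd_C (a : ℝ) : (C a : PA k) ∈ Bdd g := by
  have hQ := isQM_Mod g
  refine ⟨|a|, ?_, ?_⟩
  · rw [← map_sub]
    exact hQ.C_mem (by have := le_abs_self a; linarith)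
  · rw [← map_add]
    exact hQ.C_mem (by have := neg_abs_le a; linarith)

theorem bdd_smul (r : ℝ) {a : PA k} (ha : a ∈ Bdd g) : C r * a ∈ Bdd g := by
  obtain ⟨c, hc1, hc2⟩ := ha
  have hQ := isQM_Mod g
  rcases le_or_gt 0 r with hr | hr
  · refine ⟨r * c, ?_, ?_⟩
    · have h := hQ.smul_mem hr hc1
      have e : (C r : PA k) * (C c - a) = C (r * c) - C r * a := by rw [C_mul]; ring
      rwa [e] at h
    · have h := hQ.smul_mem hr hc2
      have e : (C r : PA k) * (C c + a) = C (r * c) + C r * a := by rw [C_mul]; ring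
      rwa [e] at h
  · refine ⟨(-r) * c, ?_, ?_⟩
    · have h := hQ.smul_mem (le_of_lt (by linarith : (0:ℝ) < -r)) hc2
      have e : (C (-r) : PA k) * (C c + a) = C ((-r) * c) - C r * a := by
        rw [C_mul, map_neg]; ring
      rwa [e] at h
    · have h := hQ.smul_mem (le_of_lt (by linarith : (0:ℝ) < -r)) hc1
      have e : (C (-r) : PA k) * (C c - a) = C ((-r) * c) + C r * a := by
        rw [C_mul, map_neg]; ring
      rwa [e] at h

theorem bdd_sq {a : PA k} (ha : a ∈ Bdd g) : a ^ 2 ∈ Bdd g := by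
  obtain ⟨c, hc1, hc2⟩ := ha
  have hQ := isQM_Mod g
  obtain ⟨N, hNpos, hN1, hN2⟩ : ∃ N : ℝ, 0 < N ∧ (C N - a) ∈ Mod g ∧ (C N + a) ∈ Mod g := by
    refine ⟨|c| + 1, by positivity, ?_, ?_⟩
    · have h := hQ.add_mem hc1 (hQ.C_mem (a := |c| + 1 - c) (by
        have := le_abs_self c; linarith))
      have e : (C c - a) + C (|c| + 1 - c) = (C (|c| + 1) - a : PA k) := by
        rw [map_sub, map_add, map_one]; ring
      rwa [e] at h
    · have h := hQ.add_mem hc2 (hQ.C_mem (a := |c| + 1 - c) (by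
        have := le_abs_self c; linarith))
      have e : (C c + a) + C (|c| + 1 - c) = (C (|c| + 1) + a : PA k) := by
        rw [map_sub, map_add, map_one]; ring
      rwa [e] at h
  refine ⟨N ^ 2, ?_, ?_⟩
  · have h1 : ((C N + a) ^ 2 * (C N - a)) ∈ Mod g := hQ.sq_mul_mem _ hN1
    have h2 : ((C N - a) ^ 2 * (C N + a)) ∈ Mod g := hQ.sq_mul_mem _ hN2
    have h3 := hQ.smul_mem (a := 1 / (2 * N)) (by positivity) (hQ.add_mem h1 h2)
    have hinv : (C (1 / (2 * N)) : PA k) * (C N * 2) = 1 := by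
      rw [show ((2:PA k)) = C (2:ℝ) by rw [map_ofNat], ← map_mul, ← map_mul,
        show (1 / (2*N)) * (N * 2) = 1 by field_simp, map_one]
    have e : (C (1 / (2 * N)) : PA k) * ((C N + a) ^ 2 * (C N - a) + (C N - a) ^ 2 * (C N + a))
        = C (N ^ 2) - a ^ 2 := by
      rw [map_pow]
      linear_combination ((C N : PA k) ^ 2 - a ^ 2) * hinv
    rwa [e] at h3
  · rw [map_pow]
    exact hQ.sos_mem ((isSOS_sq _).add (isSOS_sq a))

theorem bdd_mul {a b : PA k} (ha : a ∈ Bdd g) (hb : b ∈ Bdd g) : a * b ∈ Bdd g := by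
  have h1 : C (1/4 : ℝ) * (a + b) ^ 2 ∈ Bdd g := bdd_smul _ (bdd_sq (bdd_add ha hb))
  have h2 : C (-(1/4) : ℝ) * (a + -b) ^ 2 ∈ Bdd g :=
    bdd_smul _ (bdd_sq (bdd_add ha (bdd_neg hb)))
  have h3 := bdd_add h1 h2
  have e : C (1/4 : ℝ) * (a + b) ^ 2 + C (-(1/4) : ℝ) * (a + -b) ^ 2 = a * b := by
    rw [map_neg]
    have h4 : (C (1/4 : ℝ) : PA k) * 4 = 1 := by
      rw [show ((4:PA k)) = C (4:ℝ) by rw [map_ofNat], ← map_mul]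
      norm_num
    linear_combination (a * b) * h4
  rwa [e] at h3

theorem bdd_X (hN : ∃ N : ℝ, (C N - ∑ j : Fin k, X j ^ 2 : PA k) ∈ Mod g) (j : Fin k) :
    (X j : PA k) ∈ Bdd g := by
  obtain ⟨N, hN⟩ := hN
  have hQ := isQM_Mod g
  have hXsq : (C N - X j ^ 2 : PA k) ∈ Mod g := by
    have hrest : (∑ i ∈ Finset.univ.erase j, (X i : PA k) ^ 2) ∈ Mod g :=
      hQ.sum_mem fun i _ => hQ.sos_mem (isSOS_sq _)
    have h := hQ.add_mem hN hrest
    have hs : (X j : PA k) ^ 2 + ∑ i ∈ Finset.univ.erase j, (X i : PA k) ^ 2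
        = ∑ i : Fin k, (X i : PA k) ^ 2 :=
      Finset.add_sum_erase Finset.univ (fun i => (X i : PA k) ^ 2) (Finset.mem_univ j)
    have e : (C N - ∑ i : Fin k, X i ^ 2 : PA k) + ∑ i ∈ Finset.univ.erase j, (X i : PA k) ^ 2
        = C N - X j ^ 2 := by linear_combination hs
    rwa [e] at h
  refine ⟨(N + 1) / 2, ?_, ?_⟩
  · have h := hQ.smul_mem (a := (1:ℝ)/2) (by norm_num)
      (hQ.add_mem hXsq (hQ.sos_mem (isSOS_sq (X j - 1))))
    have e : (C ((1:ℝ)/2) : PA k) * ((C N - X j ^ 2) + (X j - 1) ^ 2)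
        = C ((N + 1) / 2) - X j := by
      have h2 : (C ((1:ℝ)/2) : PA k) * 2 = 1 := by
        rw [show ((2:PA k)) = C (2:ℝ) by rw [map_ofNat], ← map_mul]
        norm_num
      rw [show ((N+1)/2 : ℝ) = (1/2) * (N+1) by ring, C_mul, map_add, map_one]
      linear_combination (-(X j : PA k)) * h2
    rwa [e] at h
  · have h := hQ.smul_mem (a := (1:ℝ)/2) (by norm_num)
      (hQ.add_mem hXsq (hQ.sos_mem (isSOS_sq (X j + 1))))
    have e : (C ((1:ℝ)/2) : PA k) * ((C N - X j ^ 2) + (X j + 1) ^ 2)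
        = C ((N + 1) / 2) + X j := by
      have h2 : (C ((1:ℝ)/2) : PA k) * 2 = 1 := by
        rw [show ((2:PA k)) = C (2:ℝ) by rw [map_ofNat], ← map_mul]
        norm_num
      rw [show ((N+1)/2 : ℝ) = (1/2) * (N+1) by ring, C_mul, map_add, map_one]
      linear_combination (X j : PA k) * h2
    rwa [e] at h

theorem bdd_all (hN : ∃ N : ℝ, (C N - ∑ j : Fin k, X j ^ 2 : PA k) ∈ Mod g) (a : PA k) :
    a ∈ Bdd g := by
  induction a using MvPolynomial.induction_on with
  | C c => exact bdd_C c
  | add p q hp hq => exact bdd_add hp hq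
  | mul_X p j hp => exact bdd_mul hp (bdd_X hN j)

theorem arch_Mod (hN : ∃ N : ℝ, (C N - ∑ j : Fin k, X j ^ 2 : PA k) ∈ Mod g) (a : PA k) :
    ∃ c : ℝ, (C c - a) ∈ Mod g :=
  (bdd_all hN a).imp fun _ h => h.1

end Arch

end Putinar

namespace Putinar

variable {k m : ℕ} {g : Fin m → PA k}

theorem isSOS_even_pow (u : PA k) (i : ℕ) : IsSOS (u ^ (2 * i)) := by
  rw [mul_comm 2 i, pow_mul]
  exact isSOS_sq _

set_option maxHeartbeats 1000000 in
/-- Key division lemma: if `s*h = 1 + q` with `s` SOS and `q ∈ Mod g`, and the module is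
Archimedean, then `h + δ ∈ Mod g` for every `δ > 0`. -/
theorem lemmaD (hN : ∃ N : ℝ, (C N - ∑ j : Fin k, X j ^ 2 : PA k) ∈ Mod g)
    {s h q : PA k} (hs : IsSOS s) (hq : q ∈ Mod g) (hsh : s * h = 1 + q)
    {δ : ℝ} (hδ : 0 < δ) : h + C δ ∈ Mod g := by
  have hQ := isQM_Mod g
  have arch := arch_Mod hN
  -- upper bound for h, giving a positive lower bound for s
  obtain ⟨c, hc1, hc⟩ : ∃ c : ℝ, 1 ≤ c ∧ (C c - h : PA k) ∈ Mod g := by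
    obtain ⟨c0, hc0⟩ := arch h
    refine ⟨max c0 1, le_max_right _ _, ?_⟩
    have hh := hQ.add_mem hc0 (hQ.C_mem (a := max c0 1 - c0) (by simp))
    have e : (C c0 - h) + C (max c0 1 - c0) = (C (max c0 1) - h : PA k) := by
      rw [map_sub]; ring
    rwa [e] at hh
  have hcpos : (0:ℝ) < c := by linarith
  have hcne : c ≠ 0 := ne_of_gt hcpos
  have hcs : (C c * s - 1 : PA k) ∈ Mod g := by
    have hh := hQ.add_mem (hQ.sos_mul_mem hs hc) hq
    have e : s * (C c - h) + q = (C c * s - 1 : PA k) := by linear_combination -hsh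
    rwa [e] at hh
  -- lower bound for h
  obtain ⟨n₁, hn₁1, hn₁⟩ : ∃ n₁ : ℝ, 1 ≤ n₁ ∧ (C n₁ + h : PA k) ∈ Mod g := by
    obtain ⟨c1, hc1'⟩ := arch (-h)
    refine ⟨max c1 1, le_max_right _ _, ?_⟩
    have hh := hQ.add_mem hc1' (hQ.C_mem (a := max c1 1 - c1) (by simp))
    have e : (C c1 - -h) + C (max c1 1 - c1) = (C (max c1 1) + h : PA k) := by
      rw [map_sub]; ring
    rwa [e] at hh
  -- upper bound for s * (1 + q)
  obtain ⟨D, hD1, hD⟩ : ∃ D : ℝ, 1 ≤ D ∧ (C D - s * (1 + q) : PA k) ∈ Mod g := by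
    obtain ⟨D0, hD0⟩ := arch (s * (1 + q))
    refine ⟨max D0 1, le_max_right _ _, ?_⟩
    have hh := hQ.add_mem hD0 (hQ.C_mem (a := max D0 1 - D0) (by simp))
    have e : (C D0 - s * (1+q)) + C (max D0 1 - D0) = (C (max D0 1) - s * (1+q) : PA k) := by
      rw [map_sub]; ring
    rwa [e] at hh
  -- choice of B
  obtain ⟨B, hBc, hBδ, hB⟩ :
      ∃ B : ℝ, c ≤ B ∧ 2 * c * D / δ ≤ B ∧ (C B - s : PA k) ∈ Mod g := by
    obtain ⟨B0, hB0⟩ := arch s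
    refine ⟨max B0 (max c (2 * c * D / δ)), le_trans (le_max_left _ _) (le_max_right _ _),
      le_trans (le_max_right _ _) (le_max_right _ _), ?_⟩
    have hh := hQ.add_mem hB0 (hQ.C_mem (a := max B0 (max c (2*c*D/δ)) - B0) (by simp))
    have e : (C B0 - s) + C (max B0 (max c (2*c*D/δ)) - B0)
        = (C (max B0 (max c (2*c*D/δ))) - s : PA k) := by rw [map_sub]; ring
    rwa [e] at hh
  have hB1 : (1:ℝ) ≤ B := le_trans hc1 hBc
  have hBpos : (0:ℝ) < B := by linarith
  have hBne : B ≠ 0 := ne_of_gt hBpos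
  -- the contraction
  set β : ℝ := 1 / (c * B) with hβ_def
  have hβpos : 0 < β := div_pos one_pos (mul_pos hcpos hBpos)
  have hβ1 : β ≤ 1 := by
    rw [hβ_def, div_le_one (mul_pos hcpos hBpos)]
    nlinarith
  set γ : ℝ := 1 - β with hγ_def
  have hγ0 : 0 ≤ γ := by linarith
  have hγ1 : γ < 1 := by linarith
  have hinvB : (0:ℝ) ≤ 1 / B := (div_pos one_pos hBpos).le
  have hinvB2 : (0:ℝ) ≤ 1 / B ^ 2 := (div_pos one_pos (pow_pos hBpos 2)).le
  set v : PA k := C (1 / B) * s with hv_def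
  have hv : IsSOS v := hs.smul hinvB
  set u : PA k := 1 - v with hu_def
  have huv : u + v = 1 := by rw [hu_def]; ring
  have hBB : (C (1 / B) : PA k) * C B = 1 := by
    rw [← map_mul, one_div_mul_cancel hBne, map_one]
  have hBB2 : (C (1 / B) : PA k) * C (1 / B) = C (1 / B ^ 2) := by
    rw [← map_mul]; congr 1; ring
  have hu : u ∈ Mod g := by
    have hh := hQ.smul_mem hinvB hB
    have e : (C (1/B) : PA k) * (C B - s) = u := by
      rw [hu_def, hv_def]; linear_combination hBB
    rwa [e] at hh
  have hβc : (C β : PA k) * C c = C (1 / B) := by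
    rw [← map_mul]; congr 1; rw [hβ_def]; field_simp
  have hvβ : (v - C β : PA k) ∈ Mod g := by
    have hh := hQ.smul_mem (le_of_lt hβpos) hcs
    have e : (C β : PA k) * (C c * s - 1) = v - C β := by
      rw [hv_def]; linear_combination s * hβc
    rwa [e] at hh
  have hu2 : (C γ - u ^ 2 : PA k) ∈ Mod g := by
    have hh := hQ.add_mem hvβ (hQ.sos_mul_mem hv hu)
    have e : (v - C β) + v * u = (C γ - u ^ 2 : PA k) := by
      rw [hγ_def, map_sub, map_one, hu_def]; ring
    rwa [e] at hh
  have heven : ∀ i : ℕ, (C (γ ^ i) - u ^ (2 * i) : PA k) ∈ Mod g := by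
    intro i
    induction i with
    | zero => simpa using hQ.zero_mem
    | succ i ih =>
      have hh := hQ.add_mem (hQ.smul_mem hγ0 ih) (hQ.sos_mul_mem (isSOS_even_pow u i) hu2)
      have e : C γ * (C (γ ^ i) - u ^ (2*i)) + u ^ (2*i) * (C γ - u ^ 2)
          = (C (γ ^ (i+1)) - u ^ (2 * (i+1)) : PA k) := by
        rw [show γ ^ (i+1) = γ * γ ^ i by ring, C_mul]; ring
      rwa [e] at hh
  have hvh1 : v * h = C (1 / B) * (1 + q) := by
    rw [hv_def]; linear_combination (C (1/B) : PA k) * hsh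
  have hvh : v * h ∈ Mod g := by
    rw [hvh1]; exact hQ.smul_mem hinvB (hQ.add_mem hQ.one_mem hq)
  have hodd0 : (u * (v * h) + C (D / B ^ 2) : PA k) ∈ Mod g := by
    have hh := hQ.add_mem (hQ.smul_mem hinvB (hQ.add_mem hQ.one_mem hq))
      (hQ.smul_mem hinvB2 hD)
    have e : (C (1/B) : PA k) * (1 + q) + C (1/B^2) * (C D - s * (1+q))
        = u * (v * h) + C (D / B ^ 2) := by
      have hDB : (C (D / B^2) : PA k) = C (1/B^2) * C D := by
        rw [← map_mul]; congr 1; ring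
      rw [hDB, hu_def, hvh1, hv_def]
      linear_combination (s * (1+q)) * hBB2
    rwa [e] at hh
  have hodd : ∀ i : ℕ, (u ^ (2*i) * (u * (v * h)) + C (D / B ^ 2 * γ ^ i) : PA k) ∈ Mod g := by
    intro i
    have hh := hQ.add_mem (hQ.sos_mul_mem (isSOS_even_pow u i) hodd0)
      (hQ.smul_mem (a := D / B ^ 2) (div_nonneg (by linarith : (0:ℝ) ≤ D) (pow_pos hBpos 2).le) (heven i))
    have e : u ^ (2*i) * (u * (v*h) + C (D/B^2)) + C (D/B^2) * (C (γ^i) - u ^ (2*i))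
        = (u ^ (2*i) * (u * (v * h)) + C (D / B ^ 2 * γ ^ i) : PA k) := by
      rw [C_mul]; ring
    rwa [e] at hh
  have htail : ∀ n : ℕ, (u ^ (2*n) * h + C (n₁ * γ ^ n) : PA k) ∈ Mod g := by
    intro n
    have hmem : (h + C n₁ : PA k) ∈ Mod g := by rwa [add_comm] at hn₁
    have hh := hQ.add_mem (hQ.sos_mul_mem (isSOS_even_pow u n) hmem)
      (hQ.smul_mem (a := n₁) (by linarith) (heven n))
    have e : u ^ (2*n) * (h + C n₁) + C n₁ * (C (γ^n) - u ^ (2*n))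
        = (u ^ (2*n) * h + C (n₁ * γ ^ n) : PA k) := by
      rw [C_mul]; ring
    rwa [e] at hh
  have htel : ∀ n : ℕ, h = u ^ (2*n) * h
      + ∑ i ∈ Finset.range n, u ^ (2*i) * ((v + u * v) * h) := by
    intro n
    induction n with
    | zero => simp
    | succ n ih =>
      rw [Finset.sum_range_succ]
      linear_combination ih - (u ^ (2*n) * h * (1 + u)) * huv
  have hblock : ∀ i : ℕ,
      (u ^ (2*i) * ((v + u * v) * h) + C (D / B ^ 2 * γ ^ i) : PA k) ∈ Mod g := by
    intro i
    have hh := hQ.add_mem (hQ.sos_mul_mem (isSOS_even_pow u i) hvh) (hodd i)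
    have e : u ^ (2*i) * (v * h) + (u ^ (2*i) * (u * (v * h)) + C (D/B^2 * γ^i))
        = (u ^ (2*i) * ((v + u * v) * h) + C (D / B ^ 2 * γ ^ i) : PA k) := by ring
    rwa [e] at hh
  have hEn : ∀ n : ℕ,
      (h + C (n₁ * γ ^ n + ∑ i ∈ Finset.range n, D / B ^ 2 * γ ^ i) : PA k) ∈ Mod g := by
    intro n
    have hh := hQ.add_mem (htail n) (hQ.sum_mem (t := Finset.range n)
      (f := fun i => u ^ (2*i) * ((v + u * v) * h) + C (D/B^2 * γ^i)) fun i _ => hblock i)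
    have e : (u ^ (2*n) * h + C (n₁ * γ ^ n))
          + ∑ i ∈ Finset.range n, (u ^ (2*i) * ((v + u * v) * h) + C (D/B^2 * γ^i))
        = (h + C (n₁ * γ ^ n + ∑ i ∈ Finset.range n, D / B ^ 2 * γ ^ i) : PA k) := by
      rw [Finset.sum_add_distrib, map_add, map_sum]
      linear_combination -(htel n)
    rwa [e] at hh
  -- choose n
  obtain ⟨n, hn⟩ : ∃ n : ℕ, γ ^ n < δ / (2 * n₁) :=
    exists_pow_lt_of_lt_one (div_pos hδ (by linarith)) hγ1
  set S : ℝ := ∑ i ∈ Finset.range n, γ ^ i with hS_def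
  have hγβ : γ - 1 = -β := by rw [hγ_def]; ring
  have hSβ : S * β = 1 - γ ^ n := by
    have hmul := geom_sum_mul γ n
    rw [hS_def]
    linear_combination -hmul + (∑ i ∈ Finset.range n, γ ^ i) * hγβ
  have hβB : β * (c * B) = 1 := by
    rw [hβ_def]; exact one_div_mul_cancel (ne_of_gt (mul_pos hcpos hBpos))
  have hScB : S = (1 - γ ^ n) * (c * B) := by linear_combination (c*B) * hSβ - S * hβB
  have hgeo : S ≤ c * B := by nlinarith [pow_nonneg hγ0 n, mul_pos hcpos hBpos]
  have hsum_eq : ∑ i ∈ Finset.range n, D / B ^ 2 * γ ^ i = D / B ^ 2 * S := by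
    rw [hS_def, Finset.mul_sum]
  have hE : n₁ * γ ^ n + ∑ i ∈ Finset.range n, D / B ^ 2 * γ ^ i ≤ δ := by
    rw [hsum_eq]
    have h1 : n₁ * γ ^ n ≤ δ / 2 := by
      have h1a := mul_le_mul_of_nonneg_left hn.le (show (0:ℝ) ≤ n₁ by linarith)
      have hn₁ne : n₁ ≠ 0 := by linarith
      have h1b : n₁ * (δ / (2 * n₁)) = δ / 2 := by field_simp
      linarith
    have h2 : D / B ^ 2 * S ≤ D / B ^ 2 * (c * B) := by
      apply mul_le_mul_of_nonneg_left hgeo (div_nonneg (by linarith) (pow_pos hBpos 2).le)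
    have h3 : D / B ^ 2 * (c * B) ≤ δ / 2 := by
      have h3a : D / B ^ 2 * (c * B) = c * D / B := by
        rw [pow_two, div_mul_eq_mul_div, div_eq_div_iff (mul_ne_zero hBne hBne) hBne]; ring
      have h3b : 2 * c * D ≤ B * δ := (div_le_iff₀ hδ).1 hBδ
      rw [h3a, div_le_iff₀ hBpos]
      linarith
    linarith
  -- conclude
  set E : ℝ := n₁ * γ ^ n + ∑ i ∈ Finset.range n, D / B ^ 2 * γ ^ i with hE_def
  have hh := hQ.add_mem (hEn n) (hQ.C_mem (a := δ - E) (by linarith))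
  have e : (h + C E) + C (δ - E) = (h + C δ : PA k) := by rw [map_sub]; ring
  rwa [e] at hh

end Putinar

namespace Putinar

variable {k : ℕ}

/-- Upper bounds of `t` relative to `Q`. -/
def UB (Q : Set (PA k)) (t : PA k) : Set ℝ := {r : ℝ | C r - t ∈ Q}

/-- The induced character value. -/
noncomputable def lam (Q : Set (PA k)) (t : PA k) : ℝ := sInf (UB Q t)

theorem exists_point {Q : Set (PA k)} (hQ : IsQM Q) (hne : (-1 : PA k) ∉ Q)
    (harch : ∀ a : PA k, ∃ c : ℝ, C c - a ∈ Q)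
    (hsemi : ∀ t : PA k, t ∉ Q → -t ∈ Q)
    (hext : ∀ w : PA k, (∀ δ : ℝ, 0 < δ → w + C δ ∈ Q) → w ∈ Q) :
    ∃ u : Fin k → ℝ, ∀ p ∈ Q, 0 ≤ eval u p := by
  have hCpos : ∀ {r : ℝ}, (C r : PA k) ∈ Q → 0 ≤ r := fun {r} hr => hQ.nonneg_of_C_mem hne hr
  have hUB_ne : ∀ t : PA k, (UB Q t).Nonempty := fun t => harch t
  have hUB_bdd : ∀ t : PA k, BddBelow (UB Q t) := by
    intro t
    obtain ⟨c, hc⟩ := harch (-t)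
    refine ⟨-c, fun r hr => ?_⟩
    by_contra hlt
    push_neg at hlt
    have hh := hQ.add_mem hr hc
    have e : (C r - t) + (C c - -t) = (C (r + c) : PA k) := by rw [map_add]; ring
    rw [e] at hh
    have := hCpos hh
    linarith
  have hub_mem : ∀ (t : PA k) (r : ℝ), lam Q t < r → C r - t ∈ Q := by
    intro t r hr
    obtain ⟨r', hr'UB, hr'lt⟩ := (csInf_lt_iff (hUB_bdd t) (hUB_ne t)).1 hr
    have hh := hQ.add_mem hr'UB (hQ.C_mem (a := r - r') (by linarith))
    have e : (C r' - t) + C (r - r') = (C r - t : PA k) := by rw [map_sub]; ring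
    rwa [e] at hh
  have hlb_mem : ∀ (t : PA k) (r : ℝ), r < lam Q t → t - C r ∈ Q := by
    intro t r hr
    have hnot : C r - t ∉ Q := fun hmem => absurd (csInf_le (hUB_bdd t) hmem) (not_le.2 hr)
    have := hsemi _ hnot
    rwa [neg_sub] at this
  have hkey : ∀ t : PA k, (t - C (lam Q t)) ∈ Q ∧ (C (lam Q t) - t) ∈ Q := by
    intro t
    constructor
    · apply hext
      intro δ hδ
      have hh := hlb_mem t (lam Q t - δ) (by linarith)
      have e : t - C (lam Q t - δ) = t - C (lam Q t) + C δ := by rw [map_sub]; ring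
      rwa [e] at hh
    · apply hext
      intro δ hδ
      have hh := hub_mem t (lam Q t + δ) (by linarith)
      have e : C (lam Q t + δ) - t = C (lam Q t) - t + C δ := by rw [map_add]; ring
      rwa [e] at hh
  have hmulI : ∀ (a x : PA k), x ∈ Q → -x ∈ Q → a * x ∈ Q := by
    intro a x hx hnx
    have h1 := hQ.sq_mul_mem (C (1/2 : ℝ) * (a + 1)) hx
    have h2 := hQ.sq_mul_mem (C (1/2 : ℝ) * (a - 1)) hnx
    have hh := hQ.add_mem h1 h2
    have hq : (C ((1:ℝ)/2) : PA k) ^ 2 * 4 = 1 := by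
      rw [show ((4:PA k)) = C (4:ℝ) by rw [map_ofNat], ← map_pow, ← map_mul]
      norm_num
    have e : (C (1/2:ℝ) * (a + 1)) ^ 2 * x + (C (1/2:ℝ) * (a - 1)) ^ 2 * (-x) = a * x := by
      linear_combination (a * x) * hq
    rwa [e] at hh
  have hmulnegI : ∀ (a x : PA k), x ∈ Q → -x ∈ Q → -(a * x) ∈ Q := by
    intro a x hx hnx
    have := hmulI a (-x) hnx (by rwa [neg_neg])
    rwa [mul_neg] at this
  have huniq : ∀ (t : PA k) (r : ℝ), (t - C r ∈ Q) → (C r - t ∈ Q) → lam Q t = r := by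
    intro t r h1 h2
    have hge : 0 ≤ lam Q t - r := by
      have hh := hQ.add_mem h1 (hkey t).2
      have e : (t - C r) + (C (lam Q t) - t) = (C (lam Q t - r) : PA k) := by
        rw [map_sub]; ring
      rw [e] at hh
      exact hCpos hh
    have hle : 0 ≤ r - lam Q t := by
      have hh := hQ.add_mem h2 (hkey t).1
      have e : (C r - t) + (t - C (lam Q t)) = (C (r - lam Q t) : PA k) := by
        rw [map_sub]; ring
      rw [e] at hh
      exact hCpos hh
    linarith
  have hlam_C : ∀ r : ℝ, lam Q (C r) = r := by
    intro r
    exact huniq _ _ (by simpa using hQ.zero_mem) (by simpa using hQ.zero_mem)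
  have hlam_add : ∀ t t' : PA k, lam Q (t + t') = lam Q t + lam Q t' := by
    intro t t'
    apply huniq
    · have hh := hQ.add_mem (hkey t).1 (hkey t').1
      have e : (t - C (lam Q t)) + (t' - C (lam Q t'))
          = t + t' - C (lam Q t + lam Q t') := by rw [map_add]; ring
      rwa [e] at hh
    · have hh := hQ.add_mem (hkey t).2 (hkey t').2
      have e : (C (lam Q t) - t) + (C (lam Q t') - t')
          = C (lam Q t + lam Q t') - (t + t') := by rw [map_add]; ring
      rwa [e] at hh
  have hlam_mul : ∀ t t' : PA k, lam Q (t * t') = lam Q t * lam Q t' := by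
    intro t t'
    apply huniq
    · have h1 := hmulI t (t' - C (lam Q t')) (hkey t').1 (by rw [neg_sub]; exact (hkey t').2)
      have h2 := hmulI (C (lam Q t')) (t - C (lam Q t)) (hkey t).1
        (by rw [neg_sub]; exact (hkey t).2)
      have hh := hQ.add_mem h1 h2
      have e : t * (t' - C (lam Q t')) + C (lam Q t') * (t - C (lam Q t))
          = t * t' - C (lam Q t * lam Q t') := by rw [C_mul]; ring
      rwa [e] at hh
    · have h1 := hmulnegI t (t' - C (lam Q t')) (hkey t').1 (by rw [neg_sub]; exact (hkey t').2)
      have h2 := hmulnegI (C (lam Q t')) (t - C (lam Q t)) (hkey t).1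
        (by rw [neg_sub]; exact (hkey t).2)
      have hh := hQ.add_mem h1 h2
      have e : -(t * (t' - C (lam Q t'))) + -(C (lam Q t') * (t - C (lam Q t)))
          = C (lam Q t * lam Q t') - t * t' := by rw [C_mul]; ring
      rwa [e] at hh
  refine ⟨fun j => lam Q (X j), fun p hp => ?_⟩
  have heval : ∀ p : PA k, lam Q p = eval (fun j => lam Q (X j)) p := by
    intro p
    induction p using MvPolynomial.induction_on with
    | C a => rw [hlam_C, eval_C]
    | add p q hp hq => rw [hlam_add, hp, hq, map_add]
    | mul_X p j hp => rw [hlam_mul, hp, map_mul, eval_X]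
  rw [← heval p]
  have hh := hQ.add_mem (hkey p).2 hp
  have e : (C (lam Q p) - p) + p = (C (lam Q p) : PA k) := by ring
  rw [e] at hh
  exact hCpos hh

end Putinar

namespace Putinar

variable {k m : ℕ}

/-- Extension of a quadratic module by one generator. -/
def Ext (Q : Set (PA k)) (w : PA k) : Set (PA k) :=
  {a | ∃ q ∈ Q, ∃ σ, IsSOS σ ∧ a = q + σ * w}

theorem isQM_Ext {Q : Set (PA k)} (hQ : IsQM Q) (w : PA k) : IsQM (Ext Q w) := by
  constructor
  · exact ⟨1, hQ.one_mem, 0, isSOS_zero, by simp⟩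
  · rintro x y ⟨q, hq, σ, hσ, rfl⟩ ⟨q', hq', σ', hσ', rfl⟩
    exact ⟨q + q', hQ.add_mem hq hq', σ + σ', hσ.add hσ', by ring⟩
  · rintro p x ⟨q, hq, σ, hσ, rfl⟩
    exact ⟨p ^ 2 * q, hQ.sq_mul_mem p hq, p ^ 2 * σ, hσ.sq_mul p, by ring⟩

theorem subset_Ext {Q : Set (PA k)} (w : PA k) : Q ⊆ Ext Q w :=
  fun a ha => ⟨a, ha, 0, isSOS_zero, by simp⟩

theorem mem_Ext {Q : Set (PA k)} (hQ : IsQM Q) (w : PA k) : w ∈ Ext Q w :=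
  ⟨0, hQ.zero_mem, 1, isSOS_one, by simp⟩

/-- Multiplication by arbitrary elements preserves two-sided members. -/
theorem IsQM.mul_compat {Q : Set (PA k)} (hQ : IsQM Q) (a : PA k) {x : PA k}
    (hx : x ∈ Q) (hnx : -x ∈ Q) : a * x ∈ Q := by
  have h1 := hQ.sq_mul_mem (C (1/2 : ℝ) * (a + 1)) hx
  have h2 := hQ.sq_mul_mem (C (1/2 : ℝ) * (a - 1)) hnx
  have hh := hQ.add_mem h1 h2
  have hq : (C ((1:ℝ)/2) : PA k) ^ 2 * 4 = 1 := by
    rw [show ((4:PA k)) = C (4:ℝ) by rw [map_ofNat], ← map_pow, ← map_mul]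
    norm_num
  have e : (C (1/2:ℝ) * (a + 1)) ^ 2 * x + (C (1/2:ℝ) * (a - 1)) ^ 2 * (-x) = a * x := by
    linear_combination (a * x) * hq
  rwa [e] at hh

/-- The semiordering computation: if both one-generator extensions are improper, `Q` is. -/
theorem neg_one_mem_of_both {Q : Set (PA k)} (hQ : IsQM Q) {t q₁ σ₁ q₂ σ₂ : PA k}
    (hq₁ : q₁ ∈ Q) (hσ₁ : IsSOS σ₁) (hq₂ : q₂ ∈ Q) (hσ₂ : IsSOS σ₂)
    (e1 : (-1 : PA k) = q₁ + σ₁ * t) (e2 : (-1 : PA k) = q₂ + σ₂ * -t) :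
    (-1 : PA k) ∈ Q := by
  -- -(σ₁+σ₂) ∈ Q
  have hnegs : -(σ₁ + σ₂) ∈ Q := by
    have hh := hQ.add_mem (hQ.sos_mul_mem hσ₂ hq₁) (hQ.sos_mul_mem hσ₁ hq₂)
    have e : σ₂ * q₁ + σ₁ * q₂ = -(σ₁ + σ₂) := by
      linear_combination (-σ₂) * e1 + (-σ₁) * e2
    rwa [e] at hh
  -- σ₁² ∈ Q ∩ -Q
  have hsq_pos : σ₁ * σ₁ ∈ Q := hQ.sos_mem (hσ₁.mul hσ₁)
  have hsq_neg : -(σ₁ * σ₁) ∈ Q := by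
    have hh := hQ.add_mem (hQ.sos_mul_mem hσ₁ hnegs) (hQ.sos_mem (hσ₁.mul hσ₂))
    have e : σ₁ * -(σ₁ + σ₂) + σ₁ * σ₂ = -(σ₁ * σ₁) := by ring
    rwa [e] at hh
  -- σ₁(1+q₁) ∈ Q ∩ -Q
  have hx_pos : σ₁ + σ₁ * q₁ ∈ Q := by
    have hh := hQ.mul_compat (-t) hsq_pos hsq_neg
    have e : -t * (σ₁ * σ₁) = σ₁ + σ₁ * q₁ := by linear_combination σ₁ * e1
    rwa [e] at hh
  have hx_neg : -(σ₁ + σ₁ * q₁) ∈ Q := by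
    have hh := hQ.mul_compat t hsq_pos hsq_neg
    have e : t * (σ₁ * σ₁) = -(σ₁ + σ₁ * q₁) := by linear_combination (-σ₁) * e1
    rwa [e] at hh
  -- conclude
  have hh := hQ.add_mem (hQ.mul_compat t hx_pos hx_neg)
    (hQ.add_mem hq₁ (hQ.add_mem hq₁ (hQ.sos_mem (isSOS_sq q₁))))
  have e : t * (σ₁ + σ₁ * q₁) + (q₁ + (q₁ + q₁ ^ 2)) = -1 := by
    linear_combination (-(1 + q₁)) * e1
  rwa [e] at hh

/-- A positive gap on the nonnegativity set, by compactness. -/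
theorem exists_eps {g : Fin m → PA k}
    (harch : ∃ (N : ℝ) (s₀ : PA k) (s : Fin m → PA k),
      IsSOS s₀ ∧ (∀ i, IsSOS (s i)) ∧
      C N - ∑ j : Fin k, X j ^ 2 = s₀ + ∑ i, s i * g i)
    (f : PA k)
    (hf : ∀ u : Fin k → ℝ, (∀ i, 0 ≤ eval u (g i)) → 0 < eval u f) :
    ∃ ε : ℝ, 0 < ε ∧ ∀ u : Fin k → ℝ, (∀ i, 0 ≤ eval u (g i)) → 2 * ε ≤ eval u f := by
  set K : Set (Fin k → ℝ) := {u | ∀ i, 0 ≤ eval u (g i)} with hK_def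
  rcases K.eq_empty_or_nonempty with hKe | hKne
  · refine ⟨1, one_pos, fun u hu => ?_⟩
    exact absurd (show u ∈ K from hu) (by rw [hKe]; exact Set.notMem_empty u)
  · have hKclosed : IsClosed K := by
      have : K = ⋂ i, (fun u => eval u (g i)) ⁻¹' Set.Ici 0 := by
        ext u; simp [hK_def, Set.mem_iInter]
      rw [this]
      exact isClosed_iInter fun i =>
        IsClosed.preimage (MvPolynomial.continuous_eval (p := g i)) isClosed_Ici
    obtain ⟨N, s₀, s, hs₀, hs, hcert⟩ := harch
    have hsqN : ∀ u ∈ K, ∀ j : Fin k, (u j) ^ 2 ≤ N := by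
      intro u hu j
      have h1 : 0 ≤ eval u (s₀ + ∑ i, s i * g i) := by
        rw [map_add, map_sum]
        apply add_nonneg (hs₀.eval_nonneg u)
        apply Finset.sum_nonneg
        intro i _
        rw [map_mul]
        exact mul_nonneg ((hs i).eval_nonneg u) (hu i)
      have h2 : eval u (C N - ∑ j : Fin k, X j ^ 2 : PA k)
          = N - ∑ j : Fin k, (u j) ^ 2 := by
        rw [map_sub, eval_C, map_sum]
        congr 1
        exact Finset.sum_congr rfl fun i _ => by rw [map_pow, eval_X]
      have h3 : 0 ≤ N - ∑ j : Fin k, (u j) ^ 2 := by rw [← h2, hcert]; exact h1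
      have h4 : (u j) ^ 2 ≤ ∑ j : Fin k, (u j) ^ 2 :=
        Finset.single_le_sum (f := fun i => (u i) ^ 2) (fun i _ => sq_nonneg _)
          (Finset.mem_univ j)
      linarith
    have hKbox : K ⊆ Set.pi Set.univ
        (fun _ : Fin k => Set.Icc (-(Real.sqrt N)) (Real.sqrt N)) := by
      intro u hu j _
      have h5 : |u j| ≤ Real.sqrt N := by
        rw [← Real.sqrt_sq_eq_abs]
        exact Real.sqrt_le_sqrt (hsqN u hu j)
      exact abs_le.1 h5
    have hKcompact : IsCompact K :=
      (isCompact_univ_pi fun _ => isCompact_Icc).of_isClosed_subset hKclosed hKbox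
    obtain ⟨u₀, hu₀K, hmin⟩ := hKcompact.exists_isMinOn hKne
      (MvPolynomial.continuous_eval (p := f)).continuousOn
    refine ⟨eval u₀ f / 2, by have := hf u₀ hu₀K; linarith, fun u hu => ?_⟩
    have := isMinOn_iff.1 hmin u hu
    linarith

end Putinar

open Putinar in
set_option maxHeartbeats 1000000 in
/-- Putinar's Positivstellensatz. -/
theorem putinar_positivstellensatz {k m : ℕ} (g : Fin m → MvPolynomial (Fin k) ℝ)
    (harch : ∃ (N : ℝ) (s₀ : MvPolynomial (Fin k) ℝ) (s : Fin m → MvPolynomial (Fin k) ℝ),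
      IsSOS s₀ ∧ (∀ i, IsSOS (s i)) ∧
      C N - ∑ j : Fin k, X j ^ 2 = s₀ + ∑ i, s i * g i)
    (f : MvPolynomial (Fin k) ℝ)
    (hf : ∀ u : Fin k → ℝ, (∀ i, 0 ≤ eval u (g i)) → 0 < eval u f) :
    ∃ (s₀ : MvPolynomial (Fin k) ℝ) (s : Fin m → MvPolynomial (Fin k) ℝ),
      IsSOS s₀ ∧ (∀ i, IsSOS (s i)) ∧ f = s₀ + ∑ i, s i * g i := by
  classical
  have hNm : ∃ N : ℝ, (C N - ∑ j : Fin k, X j ^ 2 : PA k) ∈ Mod g := by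
    obtain ⟨N, s₀, s, h1, h2, h3⟩ := harch
    exact ⟨N, s₀, s, h1, h2, h3⟩
  obtain ⟨ε, hε, hεf⟩ := exists_eps harch f hf
  set h : PA k := f - C ε with hh_def
  suffices hf_mem : f ∈ Mod g by
    obtain ⟨s₀, s, h1, h2, h3⟩ := hf_mem
    exact ⟨s₀, s, h1, h2, h3⟩
  by_cases hcase : (-1 : PA k) ∈ Ext (Mod g) (-h)
  · -- Case 1: improper extension gives `σ h = 1 + q`, use the division lemma.
    obtain ⟨q, hq, σ, hσ, he⟩ := hcase
    have hsh : σ * h = 1 + q := by linear_combination he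
    have hmem := lemmaD hNm hσ hq hsh hε
    have e : h + C ε = f := by rw [hh_def]; ring
    rwa [e] at hmem
  · -- Case 2: Zorn's lemma and the character construction give a contradiction.
    exfalso
    set S : Set (Set (PA k)) :=
      {Q | IsQM Q ∧ Ext (Mod g) (-h) ⊆ Q ∧ (-1 : PA k) ∉ Q} with hS_def
    have hS0 : Ext (Mod g) (-h) ∈ S := ⟨isQM_Ext (isQM_Mod g) _, subset_rfl, hcase⟩
    have hchain : ∀ c ⊆ S, IsChain (· ⊆ ·) c → c.Nonempty →
        ∃ ub ∈ S, ∀ s ∈ c, s ⊆ ub := by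
      intro c hcS hch hcne
      refine ⟨⋃₀ c, ⟨?_, ?_, ?_⟩, fun s hs => Set.subset_sUnion_of_mem hs⟩
      · constructor
        · obtain ⟨Q₀, hQ₀⟩ := hcne
          exact ⟨Q₀, hQ₀, (hcS hQ₀).1.one_mem⟩
        · rintro x y ⟨Qx, hQx, hxQ⟩ ⟨Qy, hQy, hyQ⟩
          rcases hch.total hQx hQy with hle | hle
          · exact ⟨Qy, hQy, (hcS hQy).1.add_mem (hle hxQ) hyQ⟩
          · exact ⟨Qx, hQx, (hcS hQx).1.add_mem hxQ (hle hyQ)⟩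
        · rintro p x ⟨Qx, hQx, hxQ⟩
          exact ⟨Qx, hQx, (hcS hQx).1.sq_mul_mem p hxQ⟩
      · obtain ⟨Q₀, hQ₀⟩ := hcne
        exact fun a ha => ⟨Q₀, hQ₀, (hcS hQ₀).2.1 ha⟩
      · rintro ⟨Qx, hQx, hxQ⟩
        exact (hcS hQx).2.2 hxQ
    obtain ⟨Q, hQ0, hQmax⟩ := zorn_subset_nonempty S hchain _ hS0
    obtain ⟨hQM, hQsub, hQne⟩ := hQmax.1
    have hModQ : Mod g ⊆ Q := (subset_Ext (Q := Mod g) (-h)).trans hQsub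
    have harchQ : ∀ a : PA k, ∃ c : ℝ, C c - a ∈ Q := fun a =>
      (arch_Mod hNm a).imp fun c hc => hModQ hc
    have hmaxQ : ∀ w : PA k, Ext Q w ∈ S → w ∈ Q := by
      intro w hw
      exact (hQmax.2 hw (subset_Ext w)) (mem_Ext hQM w)
    have hsemi : ∀ t : PA k, t ∉ Q → -t ∈ Q := by
      intro t ht
      by_contra hnt
      have himp : ∀ w : PA k, w ∉ Q → (-1 : PA k) ∈ Ext Q w := by
        intro w hw
        by_contra hne1
        exact hw (hmaxQ w ⟨isQM_Ext hQM w, hQsub.trans (subset_Ext w), hne1⟩)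
      obtain ⟨q₁, hq₁, σ₁, hσ₁, e1⟩ := himp t ht
      obtain ⟨q₂, hq₂, σ₂, hσ₂, e2⟩ := himp (-t) hnt
      exact hQne (neg_one_mem_of_both hQM hq₁ hσ₁ hq₂ hσ₂ e1 e2)
    have hext : ∀ w : PA k, (∀ δ : ℝ, 0 < δ → w + C δ ∈ Q) → w ∈ Q := by
      intro w hw
      have hne1 : (-1 : PA k) ∉ Ext Q w := by
        rintro ⟨q, hq, σ, hσ, he⟩
        obtain ⟨Nσ, hNσ1, hNσ⟩ : ∃ Nσ : ℝ, 1 ≤ Nσ ∧ (C Nσ - σ : PA k) ∈ Q := by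
          obtain ⟨N0, hN0⟩ := harchQ σ
          refine ⟨max N0 1, le_max_right _ _, ?_⟩
          have hh := hQM.add_mem hN0 (hQM.C_mem (a := max N0 1 - N0) (by simp))
          have e : (C N0 - σ) + C (max N0 1 - N0) = (C (max N0 1) - σ : PA k) := by
            rw [map_sub]; ring
          rwa [e] at hh
        have hNσpos : (0:ℝ) < Nσ := by linarith
        have hδ' : (0:ℝ) < 1 / (2 * Nσ) := by
          apply div_pos one_pos; linarith
        have hmem := hQM.add_mem
          (hQM.add_mem hq (hQM.sos_mul_mem hσ (hw _ hδ')))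
          (hQM.smul_mem (le_of_lt hδ') hNσ)
        have hval : 1 / (2 * Nσ) * Nσ - 1 = -(1/2 : ℝ) := by
          field_simp
          ring
        have e : q + σ * (w + C (1/(2*Nσ))) + C (1/(2*Nσ)) * (C Nσ - σ)
            = (C (1/(2*Nσ) * Nσ - 1) : PA k) := by
          rw [map_sub, C_mul, map_one]
          linear_combination -he
        rw [e, hval] at hmem
        have := hQM.nonneg_of_C_mem hQne hmem
        linarith
      exact hmaxQ w ⟨isQM_Ext hQM w, hQsub.trans (subset_Ext w), hne1⟩
    obtain ⟨u, hu⟩ := exists_point hQM hQne harchQ hsemi hext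
    have hgu : ∀ i, 0 ≤ eval u (g i) := fun i => hu _ (hModQ (g_mem_Mod g i))
    have hfu := hεf u hgu
    have hhu : 0 ≤ eval u (-h) := hu _ (hQsub (mem_Ext (isQM_Mod g) (-h)))
    rw [hh_def] at hhu
    rw [map_neg, map_sub, eval_C] at hhu
    linarith
end

section
/- Let g₁,…,g_m ∈ ℝ[u₁,…,u_k] admit an algebraic certificate of compactness, and let D = {u ∈ ℝᵏ : gᵢ(u) ≥ 0 for all i} be nonempty. Then for every polynomial f ∈ ℝ[u₁,…,u_k], the supremum of the set {λ ∈ ℝ : there exist SOS polynomials s₀, s₁,…,s_m with f − λ = s₀ + Σᵢ sᵢ gᵢ} equals the minimum of f over D (which is attained since D is compact). -/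
open MvPolynomial

namespace SOSAux

variable {k : ℕ}

local notation "A" => MvPolynomial (Fin k) ℝ

theorem isSOS_zero : IsSOS (0 : A) := ⟨0, ![], by simp⟩

theorem isSOS_sq (p : A) : IsSOS (p ^ 2) := ⟨1, ![p], by simp⟩

theorem isSOS_add {s t : A} (hs : IsSOS s) (ht : IsSOS t) : IsSOS (s + t) := by
  obtain ⟨r₁, p₁, rfl⟩ := hs
  obtain ⟨r₂, p₂, rfl⟩ := ht
  refine ⟨r₁ + r₂, Fin.append p₁ p₂, ?_⟩
  rw [Fin.sum_univ_add]
  simp [Fin.append_left, Fin.append_right]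

theorem isSOS_fintypeSum {ι : Type} [Fintype ι] (p : ι → A) :
    IsSOS (∑ i, p i ^ 2) := by
  classical
  refine ⟨Fintype.card ι, fun j => p ((Fintype.equivFin ι).symm j), ?_⟩
  rw [← Equiv.sum_comp (Fintype.equivFin ι).symm (fun i => p i ^ 2)]

theorem isSOS_mul {s t : A} (hs : IsSOS s) (ht : IsSOS t) : IsSOS (s * t) := by
  obtain ⟨r₁, p₁, rfl⟩ := hs
  obtain ⟨r₂, p₂, rfl⟩ := ht
  rw [Finset.sum_mul_sum]
  have : ∑ i : Fin r₁, ∑ j : Fin r₂, p₁ i ^ 2 * p₂ j ^ 2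
      = ∑ x : Fin r₁ × Fin r₂, (p₁ x.1 * p₂ x.2) ^ 2 := by
    rw [← Finset.sum_product']
    exact Finset.sum_congr rfl (by intro x _; ring)
  rw [this]
  exact isSOS_fintypeSum _

theorem isSOS_C {c : ℝ} (hc : 0 ≤ c) : IsSOS (C c : A) := by
  have : (C c : A) = (C (Real.sqrt c)) ^ 2 := by
    rw [← map_pow, Real.sq_sqrt hc]
  rw [this]; exact isSOS_sq _

theorem isSOS_one : IsSOS (1 : A) := by
  simpa using isSOS_C (k := k) zero_le_one

theorem isSOS_sum {ι : Type} (s : Finset ι) (f : ι → A)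
    (h : ∀ i ∈ s, IsSOS (f i)) : IsSOS (∑ i ∈ s, f i) := by
  classical
  induction s using Finset.induction_on with
  | empty => simpa using isSOS_zero
  | insert a s' hnot ih =>
    rw [Finset.sum_insert hnot]
    exact isSOS_add (h a (by simp)) (ih (fun i hi => h i (by simp [hi])))

theorem isSOS_eval_nonneg {s : A} (hs : IsSOS s) (u : Fin k → ℝ) :
    0 ≤ eval u s := by
  obtain ⟨r, p, rfl⟩ := hs
  rw [map_sum]
  exact Finset.sum_nonneg fun i _ => by rw [map_pow]; positivity

end SOSAux

namespace SOSAux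

variable {k m : ℕ} (g : Fin m → MvPolynomial (Fin k) ℝ)

/-- The quadratic module generated by the `g i`. -/
def QMod : Set (MvPolynomial (Fin k) ℝ) :=
  {p | ∃ (s₀ : MvPolynomial (Fin k) ℝ) (s : Fin m → MvPolynomial (Fin k) ℝ),
    IsSOS s₀ ∧ (∀ i, IsSOS (s i)) ∧ p = s₀ + ∑ i, s i * g i}

variable {g}

theorem QMod.sos {p : MvPolynomial (Fin k) ℝ} (hp : IsSOS p) : p ∈ QMod g := by
  refine ⟨p, fun _ => 0, hp, fun _ => isSOS_zero, by simp⟩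

theorem QMod.zero : (0 : MvPolynomial (Fin k) ℝ) ∈ QMod g := QMod.sos isSOS_zero

theorem QMod.one : (1 : MvPolynomial (Fin k) ℝ) ∈ QMod g := QMod.sos isSOS_one

theorem QMod.add {p q : MvPolynomial (Fin k) ℝ} (hp : p ∈ QMod g) (hq : q ∈ QMod g) :
    p + q ∈ QMod g := by
  obtain ⟨s₀, s, hs₀, hs, rfl⟩ := hp
  obtain ⟨t₀, t, ht₀, ht, rfl⟩ := hq
  refine ⟨s₀ + t₀, fun i => s i + t i, isSOS_add hs₀ ht₀,
    fun i => isSOS_add (hs i) (ht i), ?_⟩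
  have : ∑ i : Fin m, (s i + t i) * g i
      = ∑ i : Fin m, s i * g i + ∑ i : Fin m, t i * g i := by
    rw [← Finset.sum_add_distrib]
    exact Finset.sum_congr rfl fun i _ => by ring
  simp only [this]; ring

theorem QMod.mul_sos {σ p : MvPolynomial (Fin k) ℝ} (hσ : IsSOS σ) (hp : p ∈ QMod g) :
    σ * p ∈ QMod g := by
  obtain ⟨s₀, s, hs₀, hs, rfl⟩ := hp
  refine ⟨σ * s₀, fun i => σ * s i, isSOS_mul hσ hs₀,
    fun i => isSOS_mul hσ (hs i), ?_⟩
  rw [mul_add, Finset.mul_sum]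
  congr 1
  exact Finset.sum_congr rfl fun i _ => by ring

theorem QMod.C_mem {c : ℝ} (hc : 0 ≤ c) : (MvPolynomial.C c : MvPolynomial (Fin k) ℝ) ∈ QMod g :=
  QMod.sos (isSOS_C hc)

theorem QMod.g_mem (i : Fin m) : g i ∈ QMod g := by
  classical
  refine ⟨0, fun j => if j = i then 1 else 0, isSOS_zero,
    fun j => by by_cases h : j = i <;> simp [h, isSOS_one, isSOS_zero], ?_⟩
  simp [ite_mul, Finset.sum_ite_eq']

theorem QMod.eval_nonneg {p : MvPolynomial (Fin k) ℝ} (hp : p ∈ QMod g)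
    {u : Fin k → ℝ} (hu : ∀ i, 0 ≤ MvPolynomial.eval u (g i)) :
    0 ≤ MvPolynomial.eval u p := by
  obtain ⟨s₀, s, hs₀, hs, rfl⟩ := hp
  rw [map_add, map_sum]
  have h1 := isSOS_eval_nonneg hs₀ u
  have h2 : 0 ≤ ∑ i, MvPolynomial.eval u (s i * g i) :=
    Finset.sum_nonneg fun i _ => by
      rw [map_mul]; exact mul_nonneg (isSOS_eval_nonneg (hs i) u) (hu i)
  linarith

end SOSAux

namespace SOSAux

variable {k m : ℕ} {g : Fin m → MvPolynomial (Fin k) ℝ}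

open MvPolynomial

/-- Archimedean property: every polynomial is bounded above and below modulo the module. -/
theorem arch_bound
    (harch : ∃ (N : ℝ) (s₀ : MvPolynomial (Fin k) ℝ) (s : Fin m → MvPolynomial (Fin k) ℝ),
      IsSOS s₀ ∧ (∀ i, IsSOS (s i)) ∧
      C N - ∑ j : Fin k, X j ^ 2 = s₀ + ∑ i, s i * g i)
    (hne : ∃ u : Fin k → ℝ, ∀ i, 0 ≤ eval u (g i))
    (p : MvPolynomial (Fin k) ℝ) :
    ∃ N : ℝ, 0 ≤ N ∧ C N - p ∈ QMod g ∧ C N + p ∈ QMod g := by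
  classical
  obtain ⟨N₀, s₀, s, hs₀, hs, heq⟩ := harch
  have hbig : C N₀ - ∑ j : Fin k, X j ^ 2 ∈ QMod g := ⟨s₀, s, hs₀, hs, heq⟩
  have hN₀ : 0 ≤ N₀ := by
    obtain ⟨u, hu⟩ := hne
    have h1 : 0 ≤ eval u (C N₀ - ∑ j : Fin k, X j ^ 2) := QMod.eval_nonneg hbig hu
    have h2 : eval u (C N₀ - ∑ j : Fin k, X j ^ 2) = N₀ - ∑ j : Fin k, (u j) ^ 2 := by
      simp [map_sum]
    have h3 : (0:ℝ) ≤ ∑ j : Fin k, (u j) ^ 2 := Finset.sum_nonneg fun j _ => sq_nonneg _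
    rw [h2] at h1; linarith
  have hX : ∀ i : Fin k, C N₀ - X i ^ 2 ∈ QMod g := by
    intro i
    have hid : C N₀ - X i ^ 2
        = (C N₀ - ∑ j : Fin k, X j ^ 2) + ∑ j ∈ Finset.univ.erase i, X j ^ 2 := by
      have := Finset.add_sum_erase Finset.univ (fun j : Fin k => X j ^ 2 :
        Fin k → MvPolynomial (Fin k) ℝ) (Finset.mem_univ i)
      rw [← this]; ring
    rw [hid]
    exact QMod.add hbig (QMod.sos (isSOS_sum _ _ fun j _ => isSOS_sq _))
  -- bound on squares
  have hsq : ∀ q : MvPolynomial (Fin k) ℝ, ∃ N : ℝ, 0 ≤ N ∧ C N - q ^ 2 ∈ QMod g := by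
    intro q
    induction q using MvPolynomial.induction_on with
    | C a =>
      exact ⟨a ^ 2, sq_nonneg a, by rw [← map_pow]; simpa using QMod.zero⟩
    | add q r hq hr =>
      obtain ⟨Nq, hNq, hq⟩ := hq
      obtain ⟨Nr, hNr, hr⟩ := hr
      refine ⟨2 * Nq + 2 * Nr, by linarith, ?_⟩
      have hid : C (2 * Nq + 2 * Nr) - (q + r) ^ 2
          = C 2 * (C Nq - q ^ 2) + (C 2 * (C Nr - r ^ 2) + (q - r) ^ 2) := by
        rw [map_add, map_mul, map_mul]
        have : (C 2 : MvPolynomial (Fin k) ℝ) = 2 := by rw [map_ofNat]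
        rw [this]; ring
      rw [hid]
      exact QMod.add (QMod.mul_sos (isSOS_C (by norm_num)) hq)
        (QMod.add (QMod.mul_sos (isSOS_C (by norm_num)) hr) (QMod.sos (isSOS_sq _)))
    | mul_X q i hq =>
      obtain ⟨Nq, hNq, hq⟩ := hq
      refine ⟨Nq * N₀, mul_nonneg hNq hN₀, ?_⟩
      have hid : C (Nq * N₀) - (q * X i) ^ 2
          = X i ^ 2 * (C Nq - q ^ 2) + C Nq * (C N₀ - X i ^ 2) := by
        rw [map_mul]; ring
      rw [hid]
      exact QMod.add (QMod.mul_sos (isSOS_sq _) hq) (QMod.mul_sos (isSOS_C hNq) (hX i))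
  obtain ⟨N, hN, hsqp⟩ := hsq p
  refine ⟨(N + 1) / 2, by linarith, ?_, ?_⟩
  · have h2 : (C (2⁻¹ : ℝ) : MvPolynomial (Fin k) ℝ) * 2 = 1 := by
      rw [show (2 : MvPolynomial (Fin k) ℝ) = C 2 from (map_ofNat C 2).symm, ← map_mul]
      norm_num
    have hC : (C ((N + 1) / 2) : MvPolynomial (Fin k) ℝ) = C (2⁻¹) * C N + C (2⁻¹) := by
      rw [← map_mul, ← map_add]
      congr 1
      ring
    have hid : C ((N + 1) / 2) - p
        = C (2⁻¹) * (C N - p ^ 2) + C (2⁻¹) * (p - 1) ^ 2 := by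
      linear_combination hC + p * h2
    rw [hid]
    exact QMod.add (QMod.mul_sos (isSOS_C (by norm_num)) hsqp)
      (QMod.sos (isSOS_mul (isSOS_C (by norm_num)) (isSOS_sq _)))
  · have h2 : (C (2⁻¹ : ℝ) : MvPolynomial (Fin k) ℝ) * 2 = 1 := by
      rw [show (2 : MvPolynomial (Fin k) ℝ) = C 2 from (map_ofNat C 2).symm, ← map_mul]
      norm_num
    have hC : (C ((N + 1) / 2) : MvPolynomial (Fin k) ℝ) = C (2⁻¹) * C N + C (2⁻¹) := by
      rw [← map_mul, ← map_add]
      congr 1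
      ring
    have hid : C ((N + 1) / 2) + p
        = C (2⁻¹) * (C N - p ^ 2) + C (2⁻¹) * (p + 1) ^ 2 := by
      linear_combination hC - p * h2
    rw [hid]
    exact QMod.add (QMod.mul_sos (isSOS_C (by norm_num)) hsqp)
      (QMod.sos (isSOS_mul (isSOS_C (by norm_num)) (isSOS_sq _)))

end SOSAux

namespace SOSAux

open MvPolynomial

variable {k : ℕ}

/-- From a proper Archimedean semiordering one gets an evaluation point. -/
theorem exists_eval_point (T : Set (MvPolynomial (Fin k) ℝ))
    (hadd : ∀ {x y}, x ∈ T → y ∈ T → x + y ∈ T)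
    (hmul : ∀ {σ x}, IsSOS σ → x ∈ T → σ * x ∈ T)
    (hone : (1 : MvPolynomial (Fin k) ℝ) ∈ T)
    (hsemi : ∀ b, b ∈ T ∨ -b ∈ T)
    (hproper : (C (-1) : MvPolynomial (Fin k) ℝ) ∉ T)
    (harchT : ∀ p, ∃ N : ℝ, C N - p ∈ T ∧ C N + p ∈ T) :
    ∃ u : Fin k → ℝ, ∀ p ∈ T, 0 ≤ eval u p := by
  classical
  have hsos : ∀ {σ : MvPolynomial (Fin k) ℝ}, IsSOS σ → σ ∈ T := by
    intro σ hσ; simpa using hmul hσ hone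
  have hnegc : ∀ c : ℝ, c < 0 → (C c : MvPolynomial (Fin k) ℝ) ∉ T := by
    intro c hc hcT
    apply hproper
    have : (C ((-c)⁻¹) : MvPolynomial (Fin k) ℝ) * C c = C (-1) := by
      rw [← map_mul]
      congr 1
      field_simp
      rw [div_self hc.ne]
    rw [← this]
    exact hmul (isSOS_C (le_of_lt (inv_pos.mpr (by linarith)))) hcT
  set S : MvPolynomial (Fin k) ℝ → Set ℝ := fun p => {r | C r - p ∈ T} with hS
  have hSne : ∀ p, (S p).Nonempty := by
    intro p; obtain ⟨N, h1, _⟩ := harchT p; exact ⟨N, h1⟩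
  have hSbdd : ∀ p, BddBelow (S p) := by
    intro p
    obtain ⟨N, _, h2⟩ := harchT p
    refine ⟨-N, fun r hr => ?_⟩
    by_contra hlt
    push_neg at hlt
    have hmem : (C (r + N) : MvPolynomial (Fin k) ℝ) ∈ T := by
      have : (C (r + N) : MvPolynomial (Fin k) ℝ) = (C r - p) + (C N + p) := by
        rw [map_add]; ring
      rw [this]; exact hadd hr h2
    exact hnegc (r + N) (by linarith) hmem
  set φ : MvPolynomial (Fin k) ℝ → ℝ := fun p => sInf (S p) with hφ
  have hle : ∀ {p r}, r ∈ S p → φ p ≤ r := fun h => csInf_le (hSbdd _) h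
  have hup : ∀ {p : MvPolynomial (Fin k) ℝ} {r : ℝ}, φ p < r → C r - p ∈ T := by
    intro p r h
    obtain ⟨r'', hr'', hlt⟩ := (csInf_lt_iff (hSbdd p) (hSne p)).mp h
    have : (C r : MvPolynomial (Fin k) ℝ) - p = C (r - r'') + (C r'' - p) := by
      rw [map_sub]; ring
    rw [this]
    exact hadd (hsos (isSOS_C (by linarith))) hr''
  have hnn : ∀ {p}, p ∈ T → 0 ≤ φ p := by
    intro p hp
    by_contra h
    push_neg at h
    obtain ⟨r, hr, hrneg⟩ := (csInf_lt_iff (hSbdd p) (hSne p)).mp h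
    have : (C r : MvPolynomial (Fin k) ℝ) ∈ T := by
      have hid : (C r : MvPolynomial (Fin k) ℝ) = (C r - p) + p := by ring
      rw [hid]; exact hadd hr hp
    exact hnegc r hrneg this
  have hCval : ∀ c : ℝ, φ (C c) = c := by
    intro c
    have h1 : φ (C c) ≤ c := hle (by
      show (C c : MvPolynomial (Fin k) ℝ) - C c ∈ T
      simpa using hsos isSOS_zero)
    refine le_antisymm h1 ?_
    by_contra h
    push_neg at h
    obtain ⟨r, hr, hrlt⟩ := (csInf_lt_iff (hSbdd _) (hSne _)).mp h
    have : (C (r - c) : MvPolynomial (Fin k) ℝ) ∈ T := by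
      rw [map_sub]; exact hr
    exact hnegc (r - c) (by linarith) this
  have hnegφ : ∀ p, φ (-p) = -φ p := by
    intro p
    have h1 : 0 ≤ φ p + φ (-p) := by
      by_contra h
      push_neg at h
      set δ := -(φ p + φ (-p)) / 3 with hδ
      have hδpos : 0 < δ := by rw [hδ]; linarith
      have e1 : C (φ p + δ) - p ∈ T := hup (by linarith)
      have e2 : C (φ (-p) + δ) - (-p) ∈ T := hup (by linarith)
      have hsum : (C (φ p + δ + (φ (-p) + δ)) : MvPolynomial (Fin k) ℝ) ∈ T := by
        have : (C (φ p + δ + (φ (-p) + δ)) : MvPolynomial (Fin k) ℝ)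
            = (C (φ p + δ) - p) + (C (φ (-p) + δ) - (-p)) := by
          rw [map_add]; ring
        rw [this]; exact hadd e1 e2
      exact hnegc _ (by rw [hδ] at *; linarith) hsum
    have h2 : φ p + φ (-p) ≤ 0 := by
      by_contra h
      push_neg at h
      set γ := (φ p - φ (-p)) / 2 with hγ
      have hγ1 : -φ (-p) < γ := by rw [hγ]; linarith
      have hγ2 : γ < φ p := by rw [hγ]; linarith
      have hnotmem : (C γ : MvPolynomial (Fin k) ℝ) - p ∉ T := by
        intro hmem
        exact absurd (hle hmem) (by linarith)
      have hmem : p - C γ ∈ T := by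
        rcases hsemi (C γ - p) with h | h
        · exact absurd h hnotmem
        · simpa using h
      have : φ (-p) ≤ -γ := hle (by
        show (C (-γ) : MvPolynomial (Fin k) ℝ) - (-p) ∈ T
        have : (C (-γ) : MvPolynomial (Fin k) ℝ) - (-p) = p - C γ := by
          rw [map_neg]; ring
        rw [this]; exact hmem)
      linarith
    linarith
  have haddφ : ∀ p q, φ (p + q) = φ p + φ q := by
    have hsub : ∀ p q : MvPolynomial (Fin k) ℝ, φ (p + q) ≤ φ p + φ q := by
      intro p q
      refine le_of_forall_pos_le_add fun ε hε => ?_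
      have e1 : C (φ p + ε / 2) - p ∈ T := hup (by linarith)
      have e2 : C (φ q + ε / 2) - q ∈ T := hup (by linarith)
      have : C (φ p + ε / 2 + (φ q + ε / 2)) - (p + q) ∈ T := by
        have hid : (C (φ p + ε / 2 + (φ q + ε / 2)) : MvPolynomial (Fin k) ℝ) - (p + q)
            = (C (φ p + ε / 2) - p) + (C (φ q + ε / 2) - q) := by
          rw [map_add]; ring
        rw [hid]; exact hadd e1 e2
      have := hle this
      linarith
    intro p q
    refine le_antisymm (hsub p q) ?_
    have h0 : φ (0 : MvPolynomial (Fin k) ℝ) = 0 := by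
      have := hCval 0; simpa using this
    have h1 : φ ((p + q) + (-p + -q)) ≤ φ (p + q) + φ (-p + -q) := hsub _ _
    have h2 : φ (-p + -q) ≤ φ (-p) + φ (-q) := hsub _ _
    have h3 : ((p + q) + (-p + -q) : MvPolynomial (Fin k) ℝ) = 0 := by ring
    rw [h3, h0] at h1
    rw [hnegφ, hnegφ] at h2
    linarith
  have hsmul : ∀ (c : ℝ) (p), φ (C c * p) = c * φ p := by
    have hpos : ∀ (c : ℝ), 0 < c → ∀ p, φ (C c * p) ≤ c * φ p := by
      intro c hc p
      refine le_of_forall_pos_le_add fun ε hε => ?_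
      have e1 : C (φ p + ε / c) - p ∈ T := hup (by have := div_pos hε hc; linarith)
      have : C (c * (φ p + ε / c)) - C c * p ∈ T := by
        have hid : (C (c * (φ p + ε / c)) : MvPolynomial (Fin k) ℝ) - C c * p
            = C c * (C (φ p + ε / c) - p) := by
          rw [map_mul]; ring
        rw [hid]; exact hmul (isSOS_C hc.le) e1
      have := hle this
      have hc' : c * (φ p + ε / c) = c * φ p + ε := by field_simp
      linarith [hc' ▸ this]
    have hposeq : ∀ (c : ℝ), 0 < c → ∀ p, φ (C c * p) = c * φ p := by
      intro c hc p
      refine le_antisymm (hpos c hc p) ?_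
      have h2 := hpos c⁻¹ (by positivity) (C c * p)
      have hid : (C (c⁻¹) : MvPolynomial (Fin k) ℝ) * (C c * p) = p := by
        rw [← mul_assoc, ← map_mul, inv_mul_cancel₀ (ne_of_gt hc), map_one, one_mul]
      rw [hid] at h2
      have := mul_le_mul_of_nonneg_left h2 hc.le
      rw [mul_comm c (c⁻¹ * φ (C c * p)), mul_assoc] at this
      field_simp at this
      linarith [this]
    intro c p
    rcases lt_trichotomy c 0 with hc | hc | hc
    · have hid : (C c : MvPolynomial (Fin k) ℝ) * p = -(C (-c) * p) := by
        rw [map_neg]; ring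
      rw [hid, hnegφ, hposeq (-c) (by linarith) p]; ring
    · subst hc; simp [map_zero]
      have := hCval 0; simpa using this
    · exact hposeq c hc p
  have hker : ∀ b, φ b = 0 → ∀ x, φ (b * x) = 0 := by
    intro b hb
    have hsq : ∀ q, φ (b * q ^ 2) = 0 := by
      intro q
      have hbound : ∀ ε : ℝ, 0 < ε → |φ (b * q ^ 2)| ≤ ε * φ (q ^ 2) := by
        intro ε hε
        have e1 : C ε - b ∈ T := hup (by rw [hb]; exact hε)
        have e2 : C ε + b ∈ T := by
          have := hup (p := -b) (r := ε) (by rw [hnegφ, hb]; simpa using hε)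
          simpa [sub_neg_eq_add] using this
        have m1 : q ^ 2 * (C ε - b) ∈ T := hmul (isSOS_sq q) e1
        have m2 : q ^ 2 * (C ε + b) ∈ T := hmul (isSOS_sq q) e2
        have f1 : 0 ≤ φ (q ^ 2 * (C ε - b)) := hnn m1
        have f2 : 0 ≤ φ (q ^ 2 * (C ε + b)) := hnn m2
        have g1 : φ (q ^ 2 * (C ε - b)) = ε * φ (q ^ 2) - φ (b * q ^ 2) := by
          have hid : q ^ 2 * (C ε - b) = C ε * q ^ 2 + -(b * q ^ 2) := by ring
          rw [hid, haddφ, hsmul, hnegφ]; ring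
        have g2 : φ (q ^ 2 * (C ε + b)) = ε * φ (q ^ 2) + φ (b * q ^ 2) := by
          have hid : q ^ 2 * (C ε + b) = C ε * q ^ 2 + b * q ^ 2 := by ring
          rw [hid, haddφ, hsmul]
        rw [g1] at f1; rw [g2] at f2
        rw [abs_le]; constructor <;> linarith
      have hq2 : 0 ≤ φ (q ^ 2) := hnn (hsos (isSOS_sq q))
      by_contra h
      have habs : 0 < |φ (b * q ^ 2)| := abs_pos.mpr h
      rcases eq_or_lt_of_le hq2 with h0 | h0
      · have := hbound 1 one_pos
        rw [← h0] at this
        simp at this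
        exact h this
      · have := hbound (|φ (b * q ^ 2)| / (2 * φ (q ^ 2))) (by positivity)
        have hcalc : |φ (b * q ^ 2)| / (2 * φ (q ^ 2)) * φ (q ^ 2) = |φ (b * q ^ 2)| / 2 := by
          field_simp
        rw [hcalc] at this
        linarith
    intro x
    have h2 : (C (2⁻¹ : ℝ) : MvPolynomial (Fin k) ℝ) * 2 = 1 := by
      rw [show (2 : MvPolynomial (Fin k) ℝ) = C 2 from (map_ofNat C 2).symm, ← map_mul]
      norm_num
    have hid : b * x = b * ((x + 1) * C (2⁻¹)) ^ 2 + -(b * ((x - 1) * C (2⁻¹)) ^ 2) := by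
      linear_combination (-(b * x) * (1 + 2 * C (2⁻¹ : ℝ))) * h2
    rw [hid, haddφ, hnegφ, hsq, hsq]
    ring
  have hmulφ : ∀ p q, φ (p * q) = φ p * φ q := by
    intro p q
    have hb : φ (p + -(C (φ p))) = 0 := by
      rw [haddφ, hnegφ, hCval]; ring
    have h0 := hker _ hb q
    have hid : (p + -(C (φ p))) * q = p * q + -(C (φ p) * q) := by ring
    rw [hid, haddφ, hnegφ, hsmul] at h0
    linarith
  refine ⟨fun i => φ (X i), fun p hp => ?_⟩
  have hrep : ∀ p : MvPolynomial (Fin k) ℝ, eval (fun i => φ (X i)) p = φ p := by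
    intro p
    induction p using MvPolynomial.induction_on with
    | C a => simp [hCval]
    | add p q hp hq => rw [map_add, hp, hq, haddφ]
    | mul_X p i hp => rw [map_mul, hp, hmulφ, eval_X]
  rw [hrep]
  exact hnn hp

end SOSAux

namespace SOSAux

open MvPolynomial

variable {k : ℕ}

/-- A quadratic module. -/
def IsQM (T : Set (MvPolynomial (Fin k) ℝ)) : Prop :=
  (∀ x ∈ T, ∀ y ∈ T, x + y ∈ T) ∧
  (∀ σ x : MvPolynomial (Fin k) ℝ, IsSOS σ → x ∈ T → σ * x ∈ T) ∧
  (1 : MvPolynomial (Fin k) ℝ) ∈ T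

/-- Every proper Archimedean quadratic module has a nonnegativity point. -/
theorem exists_point_of_proper (M₂ : Set (MvPolynomial (Fin k) ℝ))
    (hqm : IsQM M₂)
    (hproper : (C (-1) : MvPolynomial (Fin k) ℝ) ∉ M₂)
    (harchM : ∀ p, ∃ N : ℝ, 0 ≤ N ∧ C N - p ∈ M₂ ∧ C N + p ∈ M₂) :
    ∃ u : Fin k → ℝ, ∀ p ∈ M₂, 0 ≤ eval u p := by
  classical
  set F : Set (Set (MvPolynomial (Fin k) ℝ)) :=
    {T | IsQM T ∧ M₂ ⊆ T ∧ (C (-1) : MvPolynomial (Fin k) ℝ) ∉ T} with hF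
  have hzorn := zorn_subset_nonempty F ?hchain M₂ ⟨hqm, subset_rfl, hproper⟩
  case hchain =>
    intro c hcF hchain hcne
    refine ⟨⋃₀ c, ⟨⟨?_, ?_, ?_⟩, ?_, ?_⟩, fun s hs => Set.subset_sUnion_of_mem hs⟩
    · rintro x ⟨t₁, ht₁, hx⟩ y ⟨t₂, ht₂, hy⟩
      rcases hchain.total ht₁ ht₂ with h | h
      · exact ⟨t₂, ht₂, (hcF ht₂).1.1 x (h hx) y hy⟩
      · exact ⟨t₁, ht₁, (hcF ht₁).1.1 x hx y (h hy)⟩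
    · rintro σ x hσ ⟨t, ht, hx⟩
      exact ⟨t, ht, (hcF ht).1.2.1 σ x hσ hx⟩
    · obtain ⟨t, ht⟩ := hcne
      exact ⟨t, ht, (hcF ht).1.2.2⟩
    · obtain ⟨t, ht⟩ := hcne
      exact fun x hx => ⟨t, ht, (hcF ht).2.1 hx⟩
    · rintro ⟨t, ht, hmem⟩
      exact (hcF ht).2.2 hmem
  obtain ⟨T, hsub, hmaxT⟩ := hzorn
  obtain ⟨⟨hTadd, hTmul, hTone⟩, hM₂T, hTproper⟩ := hmaxT.1
  have hsosT : ∀ {σ : MvPolynomial (Fin k) ℝ}, IsSOS σ → σ ∈ T := by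
    intro σ hσ
    simpa using hTmul σ 1 hσ hTone
  have hC1 : (C (-1) : MvPolynomial (Fin k) ℝ) = -1 := by
    rw [map_neg, map_one]
  -- maximality: adjoining any element outside T produces -1
  have hext : ∀ d : MvPolynomial (Fin k) ℝ, d ∉ T →
      ∃ s t, s ∈ T ∧ IsSOS t ∧ (C (-1) : MvPolynomial (Fin k) ℝ) = s + d * t := by
    intro d hd
    set T' : Set (MvPolynomial (Fin k) ℝ) :=
      {x | ∃ s t, s ∈ T ∧ IsSOS t ∧ x = s + d * t} with hT'
    have hTT' : T ⊆ T' := fun x hx => ⟨x, 0, hx, isSOS_zero, by simp⟩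
    have hqm' : IsQM T' := by
      refine ⟨?_, ?_, hTT' hTone⟩
      · rintro x ⟨s₁, t₁, hs₁, ht₁, rfl⟩ y ⟨s₂, t₂, hs₂, ht₂, rfl⟩
        exact ⟨s₁ + s₂, t₁ + t₂, hTadd _ hs₁ _ hs₂, isSOS_add ht₁ ht₂, by ring⟩
      · rintro σ x hσ ⟨s, t, hs, ht, rfl⟩
        exact ⟨σ * s, σ * t, hTmul σ s hσ hs, isSOS_mul hσ ht, by ring⟩
    have hnotF : T' ∉ F := by
      intro hmem
      have hT'T : T' ⊆ T := hmaxT.2 hmem (hTT' : T ⊆ T')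
      exact hd (hT'T ⟨0, 1, hsosT isSOS_zero, isSOS_one, by simp⟩)
    have hsubM : M₂ ⊆ T' := fun x hx => hTT' (hM₂T hx)
    have : (C (-1) : MvPolynomial (Fin k) ℝ) ∈ T' := by
      by_contra hno
      exact hnotF ⟨hqm', hsubM, hno⟩
    exact this
  -- semiordering
  have hsemi : ∀ b : MvPolynomial (Fin k) ℝ, b ∈ T ∨ -b ∈ T := by
    intro b
    by_contra h
    push_neg at h
    obtain ⟨hb1, hb2⟩ := h
    obtain ⟨s₁, t₁, hs₁, ht₁, eq1⟩ := hext b hb1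
    obtain ⟨s₂, t₂, hs₂, ht₂, eq2⟩ := hext (-b) hb2
    have hmm : t₂ * s₁ + t₁ * s₂ = -(t₁ + t₂) := by
      linear_combination - t₂ * eq1 - t₁ * eq2 + (t₁ + t₂) * hC1
    have memw : -(t₁ + t₂) ∈ T := by
      rw [← hmm]
      exact hTadd _ (hTmul t₂ s₁ ht₂ hs₁) _ (hTmul t₁ s₂ ht₁ hs₂)
    obtain ⟨κ, hκ0, hκ1, hκ2⟩ := harchM b
    have A1 : t₁ * (C κ + b) ∈ T := hTmul _ _ ht₁ (hM₂T hκ2)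
    have A2 : C κ * -(t₁ + t₂) ∈ T := hTmul _ _ (isSOS_C hκ0) memw
    have A3 : C κ * t₂ ∈ T := hsosT (isSOS_mul (isSOS_C hκ0) ht₂)
    have hbt : b * t₁ ∈ T := by
      have hid : b * t₁ = t₁ * (C κ + b) + C κ * -(t₁ + t₂) + C κ * t₂ := by ring
      rw [hid]
      exact hTadd _ (hTadd _ A1 _ A2) _ A3
    apply hTproper
    rw [eq1]
    exact hTadd _ hs₁ _ hbt
  have harchT : ∀ p : MvPolynomial (Fin k) ℝ, ∃ N : ℝ, C N - p ∈ T ∧ C N + p ∈ T := by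
    intro p
    obtain ⟨N, _, h1, h2⟩ := harchM p
    exact ⟨N, hM₂T h1, hM₂T h2⟩
  obtain ⟨u, hu⟩ := exists_eval_point T (fun hx hy => hTadd _ hx _ hy)
    (fun hσ hx => hTmul _ _ hσ hx) hTone hsemi hTproper harchT
  exact ⟨u, fun p hp => hu p (hM₂T hp)⟩

end SOSAux

namespace SOSAux

open MvPolynomial

variable {k : ℕ}

/-- Newton iteration for the inverse of `y`. -/
noncomputable def newt (y p0 : MvPolynomial (Fin k) ℝ) : ℕ → MvPolynomial (Fin k) ℝ
  | 0 => p0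
  | n + 1 => newt y p0 n * (3 - y * (newt y p0 n) ^ 2) * C (2⁻¹ : ℝ)

/-- Error of the Newton iteration. -/
noncomputable def ee (y p0 : MvPolynomial (Fin k) ℝ) (n : ℕ) : MvPolynomial (Fin k) ℝ :=
  1 - y * (newt y p0 n) ^ 2

theorem ee_def (y p0 : MvPolynomial (Fin k) ℝ) (n : ℕ) :
    ee y p0 n = 1 - y * (newt y p0 n) ^ 2 := rfl

theorem ee_succ (y p0 : MvPolynomial (Fin k) ℝ) (n : ℕ) :
    ee y p0 (n + 1) = (ee y p0 n) ^ 2 * (3 + ee y p0 n) * C (4⁻¹ : ℝ) := by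
  have h24 : (C (2⁻¹ : ℝ) : MvPolynomial (Fin k) ℝ) * C (2⁻¹ : ℝ) = C (4⁻¹ : ℝ) := by
    rw [← map_mul]; norm_num
  have h41 : (C (4⁻¹ : ℝ) : MvPolynomial (Fin k) ℝ) * 4 = 1 := by
    rw [show (4 : MvPolynomial (Fin k) ℝ) = C 4 from (map_ofNat C 4).symm, ← map_mul]
    norm_num
  show 1 - y * (newt y p0 n * (3 - y * (newt y p0 n) ^ 2) * C (2⁻¹ : ℝ)) ^ 2
      = (1 - y * (newt y p0 n) ^ 2) ^ 2 * (3 + (1 - y * (newt y p0 n) ^ 2)) * C (4⁻¹ : ℝ)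
  linear_combination
    (- (y * newt y p0 n ^ 2 * (3 - y * newt y p0 n ^ 2) ^ 2)) * h24 - h41

/-- Upper bounds for the Newton error. -/
noncomputable def bseq (L : ℝ) : ℕ → ℝ
  | 0 => 1 - 1 / L
  | n + 1 => (bseq L n) ^ 2 * (3 + bseq L n) / 4

theorem bseq_pos {L : ℝ} (hL : 1 < L) : ∀ n, 0 < bseq L n := by
  intro n
  induction n with
  | zero =>
    show (0:ℝ) < 1 - 1 / L
    have : 1 / L < 1 := by rw [div_lt_one (by linarith)]; linarith
    linarith
  | succ n ih =>
    show (0:ℝ) < bseq L n ^ 2 * (3 + bseq L n) / 4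
    positivity

theorem bseq_lt_one {L : ℝ} (hL : 1 < L) : ∀ n, bseq L n < 1 := by
  intro n
  induction n with
  | zero =>
    show 1 - 1 / L < 1
    have : 0 < 1 / L := by positivity
    linarith
  | succ n ih =>
    show bseq L n ^ 2 * (3 + bseq L n) / 4 < 1
    have h0 := bseq_pos hL n
    nlinarith
theorem bseq_decay {L : ℝ} (hL : 1 < L) : ∀ δ : ℝ, 0 < δ → ∃ n, bseq L n < δ := by
  have hmono : ∀ n, bseq L (n + 1) ≤ bseq L n := by
    intro n
    show bseq L n ^ 2 * (3 + bseq L n) / 4 ≤ bseq L n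
    have h0 := bseq_pos hL n
    have h1 := bseq_lt_one hL n
    nlinarith
  have hle0 : ∀ n, bseq L n ≤ bseq L 0 := by
    intro n
    induction n with
    | zero => exact le_refl _
    | succ n ih => exact le_trans (hmono n) ih
  have hb0 := bseq_pos hL 0
  have hb1 := bseq_lt_one hL 0
  have hpow : ∀ n, bseq L n ≤ bseq L 0 ^ (n + 1) := by
    intro n
    induction n with
    | zero => simp
    | succ n ih =>
      have h0 := bseq_pos hL n
      have h2 : bseq L (n + 1) ≤ bseq L n ^ 2 := by
        show bseq L n ^ 2 * (3 + bseq L n) / 4 ≤ bseq L n ^ 2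
        nlinarith [bseq_lt_one hL n]
      calc bseq L (n + 1) ≤ bseq L n ^ 2 := h2
        _ = bseq L n * bseq L n := sq (bseq L n) ▸ (sq (bseq L n)).symm ▸ by ring
        _ ≤ bseq L 0 ^ (n + 1) * bseq L n := mul_le_mul_of_nonneg_right ih h0.le
        _ ≤ bseq L 0 ^ (n + 1) * bseq L 0 :=
            mul_le_mul_of_nonneg_left (hle0 n) (pow_nonneg hb0.le _)
        _ = bseq L 0 ^ (n + 1 + 1) := (pow_succ _ _).symm
  intro δ hδ
  obtain ⟨n, hn⟩ := exists_pow_lt_of_lt_one hδ hb1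
  refine ⟨n, lt_of_le_of_lt (le_trans (hpow n) ?_) hn⟩
  calc bseq L 0 ^ (n + 1) = bseq L 0 ^ n * bseq L 0 := pow_succ _ _
    _ ≤ bseq L 0 ^ n * 1 := mul_le_mul_of_nonneg_left hb1.le (pow_nonneg hb0.le _)
    _ = bseq L 0 ^ n := mul_one _

end SOSAux

namespace SOSAux

open MvPolynomial

variable {k : ℕ}

/-- Auxiliary preorder-like cone generated by `mm` and `w`. -/
def Cpre (mm w : MvPolynomial (Fin k) ℝ) : Set (MvPolynomial (Fin k) ℝ) :=
  {x | ∃ σ₀ σ₁ σ₂ σ₃, IsSOS σ₀ ∧ IsSOS σ₁ ∧ IsSOS σ₂ ∧ IsSOS σ₃ ∧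
    x = σ₀ + mm * σ₁ + w * σ₂ + mm * w * σ₃}

variable {mm w : MvPolynomial (Fin k) ℝ}

theorem Cpre_sos {s : MvPolynomial (Fin k) ℝ} (hs : IsSOS s) : s ∈ Cpre mm w :=
  ⟨s, 0, 0, 0, hs, isSOS_zero, isSOS_zero, isSOS_zero, by ring⟩

theorem Cpre_add {x y : MvPolynomial (Fin k) ℝ} (hx : x ∈ Cpre mm w) (hy : y ∈ Cpre mm w) :
    x + y ∈ Cpre mm w := by
  obtain ⟨σ₀, σ₁, σ₂, σ₃, h0, h1, h2, h3, rfl⟩ := hx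
  obtain ⟨τ₀, τ₁, τ₂, τ₃, g0, g1, g2, g3, rfl⟩ := hy
  exact ⟨σ₀ + τ₀, σ₁ + τ₁, σ₂ + τ₂, σ₃ + τ₃, isSOS_add h0 g0, isSOS_add h1 g1,
    isSOS_add h2 g2, isSOS_add h3 g3, by ring⟩

theorem Cpre_mul {x y : MvPolynomial (Fin k) ℝ} (hx : x ∈ Cpre mm w) (hy : y ∈ Cpre mm w) :
    x * y ∈ Cpre mm w := by
  obtain ⟨σ₀, σ₁, σ₂, σ₃, h0, h1, h2, h3, rfl⟩ := hx
  obtain ⟨τ₀, τ₁, τ₂, τ₃, g0, g1, g2, g3, rfl⟩ := hy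
  refine ⟨σ₀ * τ₀ + mm ^ 2 * (σ₁ * τ₁) + w ^ 2 * (σ₂ * τ₂) + (mm ^ 2 * w ^ 2) * (σ₃ * τ₃),
    σ₀ * τ₁ + σ₁ * τ₀ + w ^ 2 * (σ₂ * τ₃ + σ₃ * τ₂),
    σ₀ * τ₂ + σ₂ * τ₀ + mm ^ 2 * (σ₁ * τ₃ + σ₃ * τ₁),
    σ₀ * τ₃ + σ₃ * τ₀ + σ₁ * τ₂ + σ₂ * τ₁, ?_, ?_, ?_, ?_, by ring⟩
  · refine isSOS_add (isSOS_add (isSOS_add (isSOS_mul h0 g0) ?_) ?_) ?_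
    · exact isSOS_mul (isSOS_sq mm) (isSOS_mul h1 g1)
    · exact isSOS_mul (isSOS_sq w) (isSOS_mul h2 g2)
    · exact isSOS_mul (isSOS_mul (isSOS_sq mm) (isSOS_sq w)) (isSOS_mul h3 g3)
  · exact isSOS_add (isSOS_add (isSOS_mul h0 g1) (isSOS_mul h1 g0))
      (isSOS_mul (isSOS_sq w) (isSOS_add (isSOS_mul h2 g3) (isSOS_mul h3 g2)))
  · exact isSOS_add (isSOS_add (isSOS_mul h0 g2) (isSOS_mul h2 g0))
      (isSOS_mul (isSOS_sq mm) (isSOS_add (isSOS_mul h1 g3) (isSOS_mul h3 g1)))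
  · exact isSOS_add (isSOS_add (isSOS_add (isSOS_mul h0 g3) (isSOS_mul h3 g0))
      (isSOS_mul h1 g2)) (isSOS_mul h2 g1)

theorem Cpre_subM {m : ℕ} {g : Fin m → MvPolynomial (Fin k) ℝ} {κ : ℝ}
    (hκ : 0 < κ) (hmm : mm ∈ QMod g) (hw : w ∈ QMod g) (hmw : mm + w = C κ) :
    ∀ x ∈ Cpre mm w, x ∈ QMod g := by
  rintro x ⟨σ₀, σ₁, σ₂, σ₃, h0, h1, h2, h3, rfl⟩
  have hκinv : (C (κ⁻¹ : ℝ) : MvPolynomial (Fin k) ℝ) * C κ = 1 := by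
    rw [← map_mul, inv_mul_cancel₀ hκ.ne', map_one]
  have hmix : mm * w * σ₃
      = C (κ⁻¹) * ((σ₃ * w ^ 2) * mm + (σ₃ * mm ^ 2) * w) := by
    linear_combination (-(mm * w * σ₃)) * hκinv - (mm * w * σ₃ * C (κ⁻¹ : ℝ)) * hmw
  have m1 : mm * σ₁ ∈ QMod g := by rw [mul_comm]; exact QMod.mul_sos h1 hmm
  have m2 : w * σ₂ ∈ QMod g := by rw [mul_comm]; exact QMod.mul_sos h2 hw
  have m3 : mm * w * σ₃ ∈ QMod g := by
    rw [hmix]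
    refine QMod.mul_sos (isSOS_C (by positivity)) (QMod.add ?_ ?_)
    · exact QMod.mul_sos (isSOS_mul h3 (isSOS_sq w)) hmm
    · exact QMod.mul_sos (isSOS_mul h3 (isSOS_sq mm)) hw
  exact QMod.add (QMod.add (QMod.add (QMod.sos h0) m1) m2) m3

end SOSAux

namespace SOSAux

open MvPolynomial

variable {k m : ℕ} {g : Fin m → MvPolynomial (Fin k) ℝ}

theorem key_lemma
    (harch : ∃ (N : ℝ) (s₀ : MvPolynomial (Fin k) ℝ) (s : Fin m → MvPolynomial (Fin k) ℝ),
      IsSOS s₀ ∧ (∀ i, IsSOS (s i)) ∧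
      C N - ∑ j : Fin k, X j ^ 2 = s₀ + ∑ i, s i * g i)
    (hne : ∃ u : Fin k → ℝ, ∀ i, 0 ≤ eval u (g i))
    {a σp mm : MvPolynomial (Fin k) ℝ} (hσ : IsSOS σp) (hmm : mm ∈ QMod g)
    (hrel : a * σp = 1 + mm) :
    ∀ ε : ℝ, 0 < ε → a + C ε ∈ QMod g := by
  intro ε hε
  have h4sos : IsSOS (4 : MvPolynomial (Fin k) ℝ) := by
    rw [show (4 : MvPolynomial (Fin k) ℝ) = C 4 from (map_ofNat C 4).symm]
    exact isSOS_C (by norm_num)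
  have h3sos : IsSOS (3 : MvPolynomial (Fin k) ℝ) := by
    rw [show (3 : MvPolynomial (Fin k) ℝ) = C 3 from (map_ofNat C 3).symm]
    exact isSOS_C (by norm_num)
  -- bounds
  obtain ⟨c₀, hc₀0, hc₀1, hc₀2⟩ := arch_bound harch hne a
  set c : ℝ := c₀ + 1 with hcdef
  have hc : 0 < c := by rw [hcdef]; linarith
  have hc1 : C c - a ∈ QMod g := by
    have hid : (C c : MvPolynomial (Fin k) ℝ) - a = (C c₀ - a) + C 1 := by
      rw [hcdef, map_add]; ring
    rw [hid]; exact QMod.add hc₀1 (QMod.C_mem zero_le_one)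
  have hc2 : C c + a ∈ QMod g := by
    have hid : (C c : MvPolynomial (Fin k) ℝ) + a = (C c₀ + a) + C 1 := by
      rw [hcdef, map_add]; ring
    rw [hid]; exact QMod.add hc₀2 (QMod.C_mem zero_le_one)
  obtain ⟨κ₀, hκ₀0, hκ₀1, _⟩ := arch_bound harch hne mm
  set κ : ℝ := κ₀ + 1 with hκdef
  have hκ : 0 < κ := by rw [hκdef]; linarith
  set w : MvPolynomial (Fin k) ℝ := C κ - mm with hwdef
  have hw : w ∈ QMod g := by
    have hid : w = (C κ₀ - mm) + C 1 := by rw [hwdef, hκdef, map_add]; ring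
    rw [hid]; exact QMod.add hκ₀1 (QMod.C_mem zero_le_one)
  have hmw : mm + w = C κ := by rw [hwdef]; ring
  -- setup Newton iteration
  set L : ℝ := 1 + κ with hLdef
  have hL : 1 < L := by rw [hLdef]; linarith
  have hL0 : (0:ℝ) < L := by linarith
  set y : MvPolynomial (Fin k) ℝ := 1 + mm with hydef
  set p0 : MvPolynomial (Fin k) ℝ := C ((Real.sqrt L)⁻¹) with hp0def
  have hp0 : p0 ^ 2 = C (L⁻¹ : ℝ) := by
    rw [hp0def, ← map_pow]
    congr 1
    rw [inv_pow, Real.sq_sqrt hL0.le]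
  have hCL : (C L : MvPolynomial (Fin k) ℝ) = 1 + C κ := by
    rw [hLdef, map_add, map_one]
  have hLL : (C L : MvPolynomial (Fin k) ℝ) * C (L⁻¹) = 1 := by
    rw [← map_mul, mul_inv_cancel₀ hL0.ne', map_one]
  have he0 : ee y p0 0 = w * C (L⁻¹ : ℝ) := by
    rw [ee_def, show newt y p0 0 = p0 from rfl, hp0, hydef, hwdef]
    linear_combination C (L⁻¹ : ℝ) * hCL - hLL
  have hbe0 : C (bseq L 0) - ee y p0 0 = mm * C (L⁻¹ : ℝ) := by
    rw [he0]
    have hb0 : (C (bseq L 0) : MvPolynomial (Fin k) ℝ) = 1 - C (L⁻¹ : ℝ) := by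
      show (C (1 - 1/L) : MvPolynomial (Fin k) ℝ) = _
      rw [map_sub, map_one, one_div]
    rw [hb0, hwdef]
    linear_combination C (L⁻¹ : ℝ) * hCL - hLL
  -- membership of errors in the cone
  have e_mem : ∀ n, ee y p0 n ∈ Cpre mm w := by
    intro n
    induction n with
    | zero =>
      rw [he0]
      exact ⟨0, 0, C (L⁻¹), 0, isSOS_zero, isSOS_zero, isSOS_C (by positivity),
        isSOS_zero, by ring⟩
    | succ n ih =>
      rw [ee_succ]
      exact Cpre_mul (Cpre_mul (Cpre_sos (isSOS_sq _))
        (Cpre_add (Cpre_sos h3sos) ih)) (Cpre_sos (isSOS_C (by norm_num)))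
  have be_mem : ∀ n, C (bseq L n) - ee y p0 n ∈ Cpre mm w := by
    intro n
    induction n with
    | zero =>
      rw [hbe0]
      exact ⟨0, C (L⁻¹), 0, 0, isSOS_zero, isSOS_C (by positivity), isSOS_zero,
        isSOS_zero, by ring⟩
    | succ n ih =>
      have hCb : (C (bseq L (n+1)) : MvPolynomial (Fin k) ℝ)
          = (C (bseq L n)) ^ 2 * (3 + C (bseq L n)) * C (4⁻¹ : ℝ) := by
        show (C ((bseq L n) ^ 2 * (3 + bseq L n) / 4) : MvPolynomial (Fin k) ℝ) = _
        rw [div_eq_mul_inv, map_mul, map_mul, map_pow, map_add,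
          show (C (3:ℝ) : MvPolynomial (Fin k) ℝ) = 3 from map_ofNat C 3]
      have hid : C (bseq L (n+1)) - ee y p0 (n+1)
          = (C (bseq L n) - ee y p0 n)
            * (3 * (C (bseq L n) + ee y p0 n)
              + ((C (bseq L n)) ^ 2 + C (bseq L n) * ee y p0 n + (ee y p0 n) ^ 2))
            * C (4⁻¹ : ℝ) := by
        rw [hCb, ee_succ]; ring
      rw [hid]
      have hbpos := bseq_pos hL n
      refine Cpre_mul (Cpre_mul ih (Cpre_add ?_ ?_)) (Cpre_sos (isSOS_C (by norm_num)))
      · exact Cpre_mul (Cpre_sos h3sos)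
          (Cpre_add (Cpre_sos (isSOS_C hbpos.le)) (e_mem n))
      · refine Cpre_add (Cpre_add (Cpre_sos (isSOS_sq _)) ?_) (Cpre_sos (isSOS_sq _))
        exact Cpre_mul (Cpre_sos (isSOS_C hbpos.le)) (e_mem n)
  -- choose n
  obtain ⟨n, hn⟩ := bseq_decay hL (ε / c) (by positivity)
  set η : ℝ := bseq L n with hηdef
  have hη0 : 0 < η := bseq_pos hL n
  have hηε : c * η < ε := by
    have h := (lt_div_iff₀ hc).mp hn
    linarith
  set E : MvPolynomial (Fin k) ℝ := ee y p0 n with hEdef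
  set P0 : MvPolynomial (Fin k) ℝ := newt y p0 n with hP0def
  have hE2 : E = 1 - y * P0 ^ 2 := by rw [hEdef, ee_def, hP0def]
  have hy' : y = 1 + mm := hydef
  set H : MvPolynomial (Fin k) ℝ := C η with hHdef
  -- the scaled certificate identity
  have big : (H * 4) * (a + C ε)
      = (H * 4) * (a ^ 2 * σp) * P0 ^ 2
        + (C c + a) * (E + H) ^ 2 + (C c - a) * (E - H) ^ 2
        + (C c * 2) * ((H - E) * (H + E))
        + (H * C ε * 4 - C c * (H * H) * 4) := by
    linear_combination (-(4 * a * H)) * hE2 + (4 * a * H * P0 ^ 2) * hy'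
      - (4 * a * H * P0 ^ 2) * hrel
  have hT1 : (H * 4) * (a ^ 2 * σp) * P0 ^ 2 ∈ QMod g := by
    refine QMod.sos ?_
    exact isSOS_mul (isSOS_mul (isSOS_mul (isSOS_C (k := k) hη0.le) h4sos)
      (isSOS_mul (isSOS_sq a) hσ)) (isSOS_sq P0)
  have hT2 : (C c + a) * (E + H) ^ 2 ∈ QMod g := by
    rw [mul_comm]; exact QMod.mul_sos (isSOS_sq _) hc2
  have hT3 : (C c - a) * (E - H) ^ 2 ∈ QMod g := by
    rw [mul_comm]; exact QMod.mul_sos (isSOS_sq _) hc1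
  have hT4 : (C c * 2) * ((H - E) * (H + E)) ∈ QMod g := by
    have hin : (H - E) * (H + E) ∈ Cpre mm w :=
      Cpre_mul (be_mem n) (Cpre_add (Cpre_sos (isSOS_C hη0.le)) (e_mem n))
    have h2c : IsSOS (C c * 2 : MvPolynomial (Fin k) ℝ) := by
      rw [show (2 : MvPolynomial (Fin k) ℝ) = C 2 from (map_ofNat C 2).symm]
      exact isSOS_mul (isSOS_C hc.le) (isSOS_C (by norm_num))
    exact QMod.mul_sos h2c (Cpre_subM hκ hmm hw hmw _ hin)
  have hT5 : H * C ε * 4 - C c * (H * H) * 4 ∈ QMod g := by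
    have hid : H * C ε * 4 - C c * (H * H) * 4
        = (C (4 * η * (ε - c * η)) : MvPolynomial (Fin k) ℝ) := by
      rw [hHdef]
      rw [show (4 * η * (ε - c * η) : ℝ) = η * ε * 4 - c * (η * η) * 4 by ring]
      simp only [map_sub, map_mul, map_ofNat]
    rw [hid]
    exact QMod.C_mem (by nlinarith)
  have hscaled : (H * 4) * (a + C ε) ∈ QMod g := by
    rw [big]
    exact QMod.add (QMod.add (QMod.add (QMod.add hT1 hT2) hT3) hT4) hT5
  have hdown : (C ((4 * η)⁻¹) : MvPolynomial (Fin k) ℝ) * (H * 4) = 1 := by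
    rw [hHdef, show (4 : MvPolynomial (Fin k) ℝ) = C 4 from (map_ofNat C 4).symm,
      ← map_mul, ← map_mul]
    rw [show ((4 * η)⁻¹ * (η * 4) : ℝ) = 1 by rw [mul_comm η 4]; field_simp]
    exact map_one C
  have hfin : a + C ε = C ((4 * η)⁻¹) * ((H * 4) * (a + C ε)) := by
    rw [← mul_assoc, hdown, one_mul]
  rw [hfin]
  exact QMod.mul_sos (isSOS_C (by positivity)) hscaled

end SOSAux

open MvPolynomial SOSAux

theorem sos_bounds_converge_to_minimum' {k m : ℕ} (g : Fin m → MvPolynomial (Fin k) ℝ)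
    (harch : ∃ (N : ℝ) (s₀ : MvPolynomial (Fin k) ℝ) (s : Fin m → MvPolynomial (Fin k) ℝ),
      IsSOS s₀ ∧ (∀ i, IsSOS (s i)) ∧
      C N - ∑ j : Fin k, X j ^ 2 = s₀ + ∑ i, s i * g i)
    (hne : ∃ u : Fin k → ℝ, ∀ i, 0 ≤ eval u (g i))
    (f : MvPolynomial (Fin k) ℝ) :
    ∃ u₀ : Fin k → ℝ, (∀ i, 0 ≤ eval u₀ (g i)) ∧
      (∀ u : Fin k → ℝ, (∀ i, 0 ≤ eval u (g i)) → eval u₀ f ≤ eval u f) ∧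
      sSup {lam : ℝ | ∃ (s₀ : MvPolynomial (Fin k) ℝ) (s : Fin m → MvPolynomial (Fin k) ℝ),
          IsSOS s₀ ∧ (∀ i, IsSOS (s i)) ∧ f - C lam = s₀ + ∑ i, s i * g i}
        = eval u₀ f := by
  classical
  set D : Set (Fin k → ℝ) := {u | ∀ i, 0 ≤ eval u (g i)} with hDdef
  have hDclosed : IsClosed D := by
    have hDi : D = ⋂ i, {u : Fin k → ℝ | 0 ≤ eval u (g i)} := by
      ext u; simp [hDdef, Set.mem_iInter]
    rw [hDi]
    exact isClosed_iInter fun i => isClosed_le continuous_const (continuous_eval _)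
  obtain ⟨N₀, s₀', s', hs₀', hs'', heq'⟩ := harch
  have hbig : C N₀ - ∑ j : Fin k, X j ^ 2 ∈ QMod g := ⟨s₀', s', hs₀', hs'', heq'⟩
  have hDnorm : ∀ u ∈ D, ‖u‖ ≤ Real.sqrt N₀ := by
    intro u hu
    have h1 : 0 ≤ eval u (C N₀ - ∑ j : Fin k, X j ^ 2) := QMod.eval_nonneg hbig hu
    have h2 : eval u (C N₀ - ∑ j : Fin k, X j ^ 2) = N₀ - ∑ j : Fin k, (u j) ^ 2 := by
      simp [map_sum]
    rw [h2] at h1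
    rw [pi_norm_le_iff_of_nonneg (Real.sqrt_nonneg _)]
    intro i
    have h3 : (u i) ^ 2 ≤ ∑ j : Fin k, (u j) ^ 2 :=
      Finset.single_le_sum (fun j _ => sq_nonneg (u j)) (Finset.mem_univ i)
    have h4 : ‖u i‖ = Real.sqrt ((u i) ^ 2) := by
      rw [Real.sqrt_sq_eq_abs, Real.norm_eq_abs]
    rw [h4]
    exact Real.sqrt_le_sqrt (by linarith)
  have hDcompact : IsCompact D := by
    refine Metric.isCompact_of_isClosed_isBounded hDclosed ?_
    exact isBounded_iff_forall_norm_le.2 ⟨Real.sqrt N₀, hDnorm⟩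
  obtain ⟨u₀, hu₀D, hu₀min⟩ :=
    hDcompact.exists_isMinOn hne ((continuous_eval f).continuousOn)
  have hmin : ∀ u ∈ D, eval u₀ f ≤ eval u f := fun u hu => (isMinOn_iff.mp hu₀min) u hu
  set fstar : ℝ := eval u₀ f with hfstar
  have hC1 : (C (-1 : ℝ) : MvPolynomial (Fin k) ℝ) = -1 := by rw [map_neg, map_one]
  -- the main step: all near-optimal bounds are certified
  have main : ∀ ε : ℝ, 0 < ε → f - C (fstar - ε) ∈ QMod g := by
    intro ε hε
    set a : MvPolynomial (Fin k) ℝ := f - C (fstar - ε / 2) with hadef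
    have hsplit : f - C (fstar - ε) = a + C (ε / 2) := by
      rw [hadef, show (fstar - ε : ℝ) = (fstar - ε / 2) - ε / 2 by ring, map_sub]
      ring
    rw [hsplit]
    set M₂ : Set (MvPolynomial (Fin k) ℝ) :=
      {x | ∃ t σ', t ∈ QMod g ∧ IsSOS σ' ∧ x = t + (-a) * σ'} with hM₂def
    have hMM₂ : QMod g ⊆ M₂ := fun x hx => ⟨x, 0, hx, isSOS_zero, by ring⟩
    by_cases hcase : (C (-1) : MvPolynomial (Fin k) ℝ) ∈ M₂
    · obtain ⟨t, σ', ht, hσ', heq2⟩ := hcase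
      have hrel : a * σ' = 1 + t := by linear_combination heq2 - hC1
      exact key_lemma ⟨N₀, s₀', s', hs₀', hs'', heq'⟩ hne hσ' ht hrel (ε / 2) (by linarith)
    · have hqm₂ : IsQM M₂ := by
        refine ⟨?_, ?_, ⟨1, 0, QMod.one, isSOS_zero, by ring⟩⟩
        · rintro x ⟨t, σ', ht, hσ', rfl⟩ y ⟨t₂, τ, ht₂, hτ, rfl⟩
          exact ⟨t + t₂, σ' + τ, QMod.add ht ht₂, isSOS_add hσ' hτ, by ring⟩
        · rintro σ x hσ ⟨t, σ', ht, hσ', rfl⟩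
          exact ⟨σ * t, σ * σ', QMod.mul_sos hσ ht, isSOS_mul hσ hσ', by ring⟩
      have harchM₂ : ∀ p, ∃ N : ℝ, 0 ≤ N ∧ C N - p ∈ M₂ ∧ C N + p ∈ M₂ := by
        intro p
        obtain ⟨N, h0, h1, h2⟩ := arch_bound ⟨N₀, s₀', s', hs₀', hs'', heq'⟩ hne p
        exact ⟨N, h0, hMM₂ h1, hMM₂ h2⟩
      obtain ⟨u', hu'⟩ := exists_point_of_proper M₂ hqm₂ hcase harchM₂
      have hu'D : u' ∈ D := fun i => hu' (g i) (hMM₂ (QMod.g_mem i))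
      have hnegaM : -a ∈ M₂ := ⟨0, 1, QMod.zero, isSOS_one, by ring⟩
      have h1 : 0 ≤ eval u' (-a) := hu' _ hnegaM
      have h2 : eval u' a = eval u' f - (fstar - ε / 2) := by
        rw [hadef, map_sub, eval_C]
      rw [map_neg, h2] at h1
      have h3 : fstar ≤ eval u' f := hmin u' hu'D
      exact absurd h3 (by linarith)
  -- sup computation
  refine ⟨u₀, hu₀D, hmin, ?_⟩
  set S : Set ℝ := {lam : ℝ | ∃ (s₀ : MvPolynomial (Fin k) ℝ)
      (s : Fin m → MvPolynomial (Fin k) ℝ),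
      IsSOS s₀ ∧ (∀ i, IsSOS (s i)) ∧ f - C lam = s₀ + ∑ i, s i * g i} with hSdef
  have hSiff : ∀ lam : ℝ, lam ∈ S ↔ f - C lam ∈ QMod g := fun lam => Iff.rfl
  have hub : ∀ lam ∈ S, lam ≤ fstar := by
    intro lam hlam
    have h1 : 0 ≤ eval u₀ (f - C lam) := QMod.eval_nonneg ((hSiff lam).mp hlam) hu₀D
    rw [map_sub, eval_C] at h1
    linarith
  have hSne : S.Nonempty := by
    obtain ⟨N, _, _, h2⟩ := arch_bound ⟨N₀, s₀', s', hs₀', hs'', heq'⟩ hne f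
    refine ⟨-N, (hSiff (-N)).mpr ?_⟩
    have hid : f - C (-N) = C N + f := by rw [map_neg]; ring
    rw [hid]; exact h2
  have hle : sSup S ≤ fstar := csSup_le hSne hub
  have hge : fstar ≤ sSup S := by
    by_contra h
    push_neg at h
    set ε : ℝ := (fstar - sSup S) / 2 with hεdef
    have hε : 0 < ε := by rw [hεdef]; linarith
    have hmem : fstar - ε ∈ S := (hSiff _).mpr (main ε hε)
    have := le_csSup ⟨fstar, hub⟩ hmem
    rw [hεdef] at this
    linarith
  exact le_antisymm hle hge

/-- Under the Archimedean condition, the supremum of the SOS lower bounds of `f`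
equals the minimum of `f` over the (compact, nonempty) set `D`, which is attained. -/
theorem sos_bounds_converge_to_minimum {k m : ℕ} (g : Fin m → MvPolynomial (Fin k) ℝ)
    (harch : ∃ (N : ℝ) (s₀ : MvPolynomial (Fin k) ℝ) (s : Fin m → MvPolynomial (Fin k) ℝ),
      IsSOS s₀ ∧ (∀ i, IsSOS (s i)) ∧
      C N - ∑ j : Fin k, X j ^ 2 = s₀ + ∑ i, s i * g i)
    (hne : ∃ u : Fin k → ℝ, ∀ i, 0 ≤ eval u (g i))
    (f : MvPolynomial (Fin k) ℝ) :
    ∃ u₀ : Fin k → ℝ, (∀ i, 0 ≤ eval u₀ (g i)) ∧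
      (∀ u : Fin k → ℝ, (∀ i, 0 ≤ eval u (g i)) → eval u₀ f ≤ eval u f) ∧
      sSup {lam : ℝ | ∃ (s₀ : MvPolynomial (Fin k) ℝ) (s : Fin m → MvPolynomial (Fin k) ℝ),
          IsSOS s₀ ∧ (∀ i, IsSOS (s i)) ∧ f - C lam = s₀ + ∑ i, s i * g i}
        = eval u₀ f :=
  sos_bounds_converge_to_minimum' g harch hne f
end
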